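/- arXiv:1903.08795 — 6 statements merged into one kernel-verified Lean document; each statement's English description precedes it below -/
import Mathlib

section
/- Let H be a 2-connected 3-regular bipartite simple graph with parts X and Y, and let ŷ ∈ Y be such that G = H - ŷ is 2-connected. Then G has no 2-factor, but G has a 2-regular subgraph omitting exactly one vertex. -/
open scoped Classical

open SimpleGraph

/-- A graph is 2-connected if it has at least 3 vertices and deleting any single vertex
leaves it connected. -/
def TwoConnected {V : Type} [Fintype V] (G : SimpleGraph V) : Prop :=
  3 ≤ Fintype.card V ∧ ∀ v : V, (G.induce {u | u ≠ v}).Connected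

/-- `H` is a 2-regular subgraph: every vertex of `H` has degree exactly 2 in `H`. -/
def IsTwoRegularSub {V : Type} (G : SimpleGraph V) (H : G.Subgraph) : Prop :=
  ∀ v ∈ H.verts, (H.neighborSet v).ncard = 2

open Finset

section
variable {W : Type} [Fintype W]

private lemma card_pairs_fst' (R : W → W → Prop) (A B : Finset W) :
    ((A ×ˢ B).filter fun z => R z.1 z.2).card
      = ∑ a ∈ A, (B.filter fun b => R a b).card := by
  classical
  rw [Finset.card_eq_sum_card_fiberwise (f := Prod.fst) (t := A)
    (by intro x hx; simp only [Finset.mem_coe, mem_filter, mem_product] at hx; exact hx.1.1)]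
  refine Finset.sum_congr rfl ?_
  intro a ha
  apply Finset.card_bij (fun z _ => z.2)
  · intro z hz
    simp only [mem_filter, mem_product] at hz
    simp only [mem_filter]
    exact ⟨hz.1.1.2, hz.2 ▸ hz.1.2⟩
  · intro z hz z' hz' hzz
    simp only [mem_filter, mem_product] at hz hz'
    exact Prod.ext (hz.2.trans hz'.2.symm) hzz
  · intro b hb
    simp only [mem_filter] at hb
    refine ⟨(a, b), ?_, rfl⟩
    simp only [mem_filter, mem_product]
    exact ⟨⟨⟨ha, hb.1⟩, hb.2⟩, trivial⟩

private lemma card_pairs_snd' (R : W → W → Prop) (A B : Finset W) :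
    ((A ×ˢ B).filter fun z => R z.1 z.2).card
      = ∑ b ∈ B, (A.filter fun a => R a b).card := by
  classical
  have swap_bij : ((A ×ˢ B).filter fun z => R z.1 z.2).card
      = ((B ×ˢ A).filter fun z => R z.2 z.1).card := by
    apply Finset.card_bij (fun z _ => (z.2, z.1))
    · intro z hz; simp only [mem_filter, mem_product] at hz ⊢
      exact ⟨⟨hz.1.2, hz.1.1⟩, hz.2⟩
    · intro z hz z' hz' he
      exact Prod.ext (congrArg Prod.snd he) (congrArg Prod.fst he)
    · intro z hz; simp only [mem_filter, mem_product] at hz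
      refine ⟨(z.2, z.1), ?_, rfl⟩
      simp only [mem_filter, mem_product]
      exact ⟨⟨hz.1.2, hz.1.1⟩, hz.2⟩
  rw [swap_bij, card_pairs_fst' (fun a b => R b a) B A]

private lemma bip_deg_sum (R : W → W → Prop) (hsymm : ∀ a b, R a b → R b a)
    (p : W → Prop) (hbi : ∀ a b, R a b → (p a ↔ ¬ p b)) :
    ∑ a ∈ univ.filter p, (univ.filter fun b => R a b).card
      = ∑ b ∈ univ.filter (fun w => ¬ p w), (univ.filter fun a => R b a).card := by
  have h1 : ∀ a ∈ univ.filter p, (univ.filter fun b => R a b).card =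
      (((univ.filter fun w => ¬ p w)).filter fun b => R a b).card := by
    intro a ha
    simp only [mem_filter, mem_univ, true_and] at ha
    congr 1
    ext b
    simp only [mem_filter, mem_univ, true_and]
    exact ⟨fun hr => ⟨(hbi a b hr).mp ha, hr⟩, fun h => h.2⟩
  have h2 : ∀ b ∈ univ.filter (fun w => ¬ p w), (univ.filter fun a => R b a).card =
      ((univ.filter p).filter fun a => R a b).card := by
    intro b hb
    simp only [mem_filter, mem_univ, true_and] at hb
    congr 1
    ext a
    simp only [mem_filter, mem_univ, true_and]
    constructor
    · intro hr
      have hr' := hsymm b a hr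
      exact ⟨(hbi a b hr').mpr hb, hr'⟩
    · intro h; exact hsymm a b h.2
  rw [Finset.sum_congr rfl h1, Finset.sum_congr rfl h2,
    ← card_pairs_fst' R (univ.filter p) (univ.filter fun w => ¬ p w),
    ← card_pairs_snd' R (univ.filter p) (univ.filter fun w => ¬ p w)]

private lemma sum_eq_one_exists {s : Finset W} {f : W → ℕ} (h : ∑ a ∈ s, f a = 1) :
    ∃ t ∈ s, f t = 1 ∧ ∀ b ∈ s, b ≠ t → f b = 0 := by
  classical
  have hex : ∃ t ∈ s, f t ≠ 0 := by
    by_contra hc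
    push_neg at hc
    have : ∑ a ∈ s, f a = 0 := Finset.sum_eq_zero hc
    omega
  obtain ⟨t, ht, hft⟩ := hex
  have hle : f t ≤ 1 := h ▸ Finset.single_le_sum (fun i _ => Nat.zero_le _) ht
  have hft1 : f t = 1 := by omega
  refine ⟨t, ht, hft1, ?_⟩
  intro b hb hbt
  have : f t + f b ≤ ∑ a ∈ s, f a := by
    have := Finset.add_sum_erase s f ht
    have hb' : b ∈ s.erase t := Finset.mem_erase.mpr ⟨hbt, hb⟩
    have h2 : f b ≤ ∑ a ∈ s.erase t, f a := Finset.single_le_sum (fun i _ => Nat.zero_le _) hb'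
    omega
  omega

private lemma reach_closed (Gr : SimpleGraph W) (A : Set W)
    (h : ∀ a b, Gr.Adj a b → a ∈ A → b ∈ A) :
    ∀ a b : W, Gr.Reachable a b → a ∈ A → b ∈ A := by
  intro a b hr ha
  obtain ⟨w⟩ := hr
  induction w with
  | nil => exact ha
  | cons hadj _ ih => exact ih (h _ _ hadj ha)

private lemma not_connected_of_closed (Gr : SimpleGraph W) (A : Set W)
    (h : ∀ a b, Gr.Adj a b → a ∈ A → b ∈ A) (a b : W) (ha : a ∈ A) (hb : b ∉ A) :
    ¬ Gr.Connected := by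
  intro hc
  exact hb (reach_closed Gr A h a b (hc.preconnected a b) ha)
end

section
variable {V : Type} [Fintype V]

private lemma card_filter_val (s : Set V) {ft : Fintype ↥s} (Q : ↥s → Prop)
    {dq : DecidablePred Q} (P : V → Prop)
    (h : ∀ v : ↥s, Q v ↔ P v.val) :
    (@Finset.filter _ Q dq (@univ _ ft)).card
      = ((univ : Finset V).filter fun w => w ∈ s ∧ P w).card := by
  classical
  have h0 : @Finset.filter _ Q dq (@univ _ ft) = (@univ _ ft).filter (fun v : ↥s => P v.val) := by
    ext v; simp [h v]
  rw [h0, ← Finset.card_image_of_injective (f := (Subtype.val : ↥s → V))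
    ((@univ _ ft).filter fun v : ↥s => P v.val) Subtype.val_injective]
  congr 1
  ext w
  simp only [Finset.mem_image, mem_filter, mem_univ, true_and]
  constructor
  · rintro ⟨v, hv, rfl⟩; exact ⟨v.2, hv⟩
  · rintro ⟨hws, hw⟩; exact ⟨⟨w, hws⟩, hw, rfl⟩

private lemma ncard_nbr_eq_filter (R : V → V → Prop) (a : V) :
    ({b | R a b} : Set V).ncard = (univ.filter fun b => R a b).card := by
  classical
  rw [Set.ncard_eq_toFinset_card']
  congr 1
  ext b
  simp

end

section
open SimpleGraph
variable {V : Type} [Fintype V]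

private lemma no_two_factor (H : SimpleGraph V)
    (X Y : Set V) (hpart : ∀ v : V, (v ∈ X ∧ v ∉ Y) ∨ (v ∈ Y ∧ v ∉ X))
    (hbip : ∀ ⦃u v⦄, H.Adj u v → (u ∈ X ∧ v ∈ Y) ∨ (u ∈ Y ∧ v ∈ X))
    (hreg : ∀ v : V, (H.neighborSet v).ncard = 3)
    (y0 : V) (hy0 : y0 ∈ Y) :
    ¬ ∃ M : (H.induce {u | u ≠ y0}).Subgraph,
        M.IsSpanning ∧ IsTwoRegularSub (H.induce {u | u ≠ y0}) M := by
  intro hex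
  set S : Set V := {u | u ≠ y0} with hS
  obtain ⟨M, hspan, h2reg⟩ := hex
  have hXY : ∀ v : V, v ∈ X ↔ v ∉ Y := by
    intro v; rcases hpart v with ⟨h1, h2⟩ | ⟨h1, h2⟩
    · exact ⟨fun _ => h2, fun _ => h1⟩
    · exact ⟨fun h => absurd h (fun hX => h2 hX), fun h => absurd h1 h⟩
  have hXiff : ∀ a b : V, H.Adj a b → ((a ∈ X) ↔ ¬ (b ∈ X)) := by
    intro a b hab
    rcases hbip hab with ⟨ha, hb⟩ | ⟨ha, hb⟩
    · exact ⟨fun _ hbX => ((hXY b).mp hbX) hb, fun _ => ha⟩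
    · constructor
      · intro haX; exact absurd ha ((hXY a).mp haX)
      · intro hnb; exact absurd hb hnb
  have hdegH : ∀ a : V, (univ.filter fun b => H.Adj a b).card = 3 := by
    intro a
    have := hreg a
    rw [show H.neighborSet a = {b | H.Adj a b} from rfl, ncard_nbr_eq_filter] at this
    exact this
  have hXcard : (univ.filter fun w : V => w ∈ X).card = (univ.filter fun w : V => w ∈ Y).card := by
    have hsum := bip_deg_sum H.Adj (fun a b h => h.symm) (fun w => w ∈ X) hXiff
    rw [Finset.sum_congr rfl (fun a _ => hdegH a), Finset.sum_congr rfl (fun a _ => hdegH a),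
      Finset.sum_const, Finset.sum_const, smul_eq_mul, smul_eq_mul] at hsum
    have hfilter : (univ.filter fun w : V => ¬ (fun w : V => w ∈ X) w)
        = (univ.filter fun w : V => w ∈ Y) := by
      ext w; simp only [mem_filter, mem_univ, true_and]
      constructor
      · intro h
        rcases hpart w with ⟨h1, _⟩ | ⟨h1, _⟩
        · exact absurd h1 h
        · exact h1
      · intro h hX; exact (hXY w).mp hX h
    rw [hfilter] at hsum
    omega
  have hdegM : ∀ a : ↥S, (univ.filter fun b : ↥S => M.Adj a b).card = 2 := by
    intro a
    have := h2reg a (hspan a)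
    rw [show M.neighborSet a = {b | M.Adj a b} from rfl, ncard_nbr_eq_filter] at this
    exact this
  have hbiM : ∀ a b : ↥S, M.Adj a b → (((fun v : ↥S => (v : V) ∈ X) a) ↔ ¬ ((fun v : ↥S => (v : V) ∈ X) b)) := by
    intro a b hab
    exact hXiff _ _ (M.adj_sub hab)
  have hsum := bip_deg_sum M.Adj (fun a b h => M.adj_symm h) (fun v : ↥S => (v : V) ∈ X) hbiM
  rw [Finset.sum_congr rfl (fun a _ => hdegM a), Finset.sum_congr rfl (fun a _ => hdegM a),
    Finset.sum_const, Finset.sum_const, smul_eq_mul, smul_eq_mul] at hsum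
  have e1 : ((univ : Finset ↥S).filter (fun v : ↥S => (v : V) ∈ X)).card
      = (univ.filter fun w : V => w ∈ X).card := by
    refine (card_filter_val S (fun v : ↥S => (v : V) ∈ X) (fun w => w ∈ X)
      (fun v => Iff.rfl)).trans ?_
    congr 1
    ext w
    simp only [mem_filter, mem_univ, true_and, hS, Set.mem_setOf_eq]
    constructor
    · exact fun h => h.2
    · intro h
      exact ⟨fun he => ((hXY w).mp h) (he ▸ hy0), h⟩
  have e2 : ((univ : Finset ↥S).filter (fun w : ↥S => ¬ (fun v : ↥S => (v : V) ∈ X) w)).card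
      = (univ.filter fun w : V => w ∈ Y).card - 1 := by
    refine (card_filter_val S (fun w : ↥S => ¬ (fun v : ↥S => (v : V) ∈ X) w)
      (fun w => ¬ w ∈ X) (fun v => Iff.rfl)).trans ?_
    rw [Finset.filter_congr_decidable]
    have heq : (univ.filter fun w : V => w ∈ S ∧ ¬ w ∈ X)
        = (univ.filter fun w : V => w ∈ Y).erase y0 := by
      ext w
      simp only [mem_filter, mem_univ, true_and, Finset.mem_erase, hS, Set.mem_setOf_eq]
      constructor
      · rintro ⟨h1, h2⟩
        refine ⟨h1, ?_⟩
        rcases hpart w with ⟨hX, _⟩ | ⟨hY, _⟩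
        · exact absurd hX h2
        · exact hY
      · rintro ⟨h1, h2⟩
        exact ⟨h1, fun hX => ((hXY w).mp hX) h2⟩
    rw [heq, Finset.card_erase_of_mem (by simp [hy0])]
  have hYpos : 1 ≤ (univ.filter fun w : V => w ∈ Y).card :=
    Finset.card_pos.mpr ⟨y0, by simp [hy0]⟩
  rw [e1, e2] at hsum
  omega
end

section
open SimpleGraph
variable {V : Type} [Fintype V]

private lemma XY_excl {X Y : Set V} (hpart : ∀ v : V, (v ∈ X ∧ v ∉ Y) ∨ (v ∈ Y ∧ v ∉ X)) :
    ∀ v : V, v ∈ X ↔ v ∉ Y := by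
  intro v; rcases hpart v with ⟨h1, h2⟩ | ⟨h1, h2⟩
  · exact ⟨fun _ => h2, fun _ => h1⟩
  · exact ⟨fun h => absurd h1 (fun _ => h2 h), fun h => absurd h1 h⟩

private lemma adj_closed_contra {W : Type} (Gr : SimpleGraph W) (A : Set W)
    (h : ∀ a b, Gr.Adj a b → a ∈ A → b ∈ A) (a b : W) (ha : a ∈ A) (hb : b ∉ A)
    (hc : Gr.Connected) : False := by
  obtain ⟨w⟩ := hc.preconnected a b
  have hwalk : ∀ {c d : W}, Gr.Walk c d → c ∈ A → d ∈ A := by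
    intro c d p
    induction p with
    | nil => exact id
    | cons hadj _ ih => exact fun hc' => ih (h _ _ hadj hc')
  exact hb (hwalk w ha)

private lemma hall_condition (H : SimpleGraph V)
    (X Y : Set V) (hpart : ∀ v : V, (v ∈ X ∧ v ∉ Y) ∨ (v ∈ Y ∧ v ∉ X))
    (hbip : ∀ ⦃u v⦄, H.Adj u v → (u ∈ X ∧ v ∈ Y) ∨ (u ∈ Y ∧ v ∈ X))
    (hdegH : ∀ a : V, (univ.filter fun b => H.Adj a b).card = 3)
    (y0 x : V) (hy0 : y0 ∈ Y) (hadjx : H.Adj y0 x)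
    (hG2conn : TwoConnected (H.induce {u | u ≠ y0}))
    (s : Finset ↥{w : V | w ∈ X ∧ ¬ H.Adj y0 w}) :
    s.card ≤ (s.biUnion (fun v =>
      (univ.filter fun b => H.Adj v.val b).filter
        (fun b => b ∈ {w : V | w ∈ Y ∧ ¬ H.Adj x w}))).card := by
  by_contra hlt
  push_neg at hlt
  have hXY := XY_excl hpart
  have hxX : x ∈ X := by
    rcases hbip hadjx with ⟨h1, h2⟩ | ⟨h1, h2⟩
    · exact absurd hy0 ((hXY y0).mp h1)
    · exact h2
  have hxney0 : x ≠ y0 := fun h => ((hXY x).mp hxX) (h ▸ hy0)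
  -- the sets
  set Sf : Finset V := s.image Subtype.val with hSf
  have hSfcard : Sf.card = s.card := Finset.card_image_of_injective s Subtype.val_injective
  have hSfX : ∀ w ∈ Sf, w ∈ X ∧ ¬ H.Adj y0 w := by
    intro w hw
    simp only [hSf, Finset.mem_image] at hw
    obtain ⟨v, _, rfl⟩ := hw
    exact v.2
  set T0 : Finset V := Sf.biUnion (fun w => univ.filter fun b => H.Adj w b) with hT0
  have hT0mem : ∀ b : V, b ∈ T0 ↔ ∃ a ∈ Sf, H.Adj a b := by
    intro b
    simp [hT0, Finset.mem_biUnion]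
  have hT0Y : ∀ b ∈ T0, b ∈ Y := by
    intro b hb
    obtain ⟨a, ha, hab⟩ := (hT0mem b).mp hb
    rcases hbip hab with ⟨_, h2⟩ | ⟨h1, _⟩
    · exact h2
    · exact absurd h1 ((hXY a).mp (hSfX a ha).1)
  have hy0T0 : y0 ∉ T0 := by
    intro hmem
    obtain ⟨a, ha, hab⟩ := (hT0mem y0).mp hmem
    exact (hSfX a ha).2 hab.symm
  -- TY = T0.filter (∈ Y')
  have hTY : s.biUnion (fun v => (univ.filter fun b => H.Adj v.val b).filter
      (fun b => b ∈ {w : V | w ∈ Y ∧ ¬ H.Adj x w}))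
      = T0.filter (fun b => b ∈ {w : V | w ∈ Y ∧ ¬ H.Adj x w}) := by
    rw [hT0, Finset.filter_biUnion, hSf, Finset.image_biUnion]
  set TY := T0.filter (fun b => b ∈ {w : V | w ∈ Y ∧ ¬ H.Adj x w}) with hTYdef
  rw [hTY] at hlt
  -- counting: 3 |Sf| = pairs = sum over T0
  have hnbr_sub : ∀ a ∈ Sf, (univ.filter fun b => H.Adj a b) ⊆ T0 := by
    intro a ha b hb
    simp only [mem_filter, mem_univ, true_and] at hb
    exact (hT0mem b).mpr ⟨a, ha, hb⟩
  have hpairs1 : ((Sf ×ˢ T0).filter fun z => H.Adj z.1 z.2).card = 3 * Sf.card := by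
    rw [card_pairs_fst']
    have : ∀ a ∈ Sf, (T0.filter fun b => H.Adj a b).card = 3 := by
      intro a ha
      rw [show T0.filter (fun b => H.Adj a b) = univ.filter (fun b => H.Adj a b) from ?_]
      · exact hdegH a
      · apply Finset.Subset.antisymm
        · intro b hb; simp only [mem_filter, mem_univ, true_and] at hb ⊢; exact hb.2
        · intro b hb
          simp only [mem_filter, mem_univ, true_and] at hb
          exact Finset.mem_filter.mpr ⟨hnbr_sub a ha (by simp [hb]), hb⟩
    rw [Finset.sum_congr rfl this, Finset.sum_const, smul_eq_mul, mul_comm]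
  have hpairs2 : ((Sf ×ˢ T0).filter fun z => H.Adj z.1 z.2).card
      = ∑ b ∈ T0, (Sf.filter fun a => H.Adj a b).card := card_pairs_snd' _ _ _
  have hin_le : ∀ b ∈ T0, (Sf.filter fun a => H.Adj a b).card ≤ 3 := by
    intro b _
    have hsub : Sf.filter (fun a => H.Adj a b) ⊆ univ.filter (fun a => H.Adj b a) := by
      intro a ha
      simp only [mem_filter, mem_univ, true_and] at ha ⊢
      exact ha.2.symm
    exact le_trans (Finset.card_le_card hsub) (le_of_eq (hdegH b))
  have hST : Sf.card ≤ T0.card := by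
    by_contra hc
    push_neg at hc
    have h1 : ∑ b ∈ T0, (Sf.filter fun a => H.Adj a b).card ≤ 3 * T0.card := by
      calc ∑ b ∈ T0, (Sf.filter fun a => H.Adj a b).card ≤ ∑ _b ∈ T0, 3 :=
            Finset.sum_le_sum hin_le
        _ = 3 * T0.card := by rw [Finset.sum_const, smul_eq_mul, mul_comm]
    omega
  -- T0 ⊆ TY ∪ (B erase y0)
  have hBsub : T0 ⊆ TY ∪ ((univ.filter fun b => H.Adj x b).erase y0) := by
    intro b hb
    by_cases hbx : H.Adj x b
    · refine Finset.mem_union_right _ ?_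
      refine Finset.mem_erase.mpr ⟨?_, by simp [hbx]⟩
      intro h; rw [h] at hb; exact hy0T0 hb
    · refine Finset.mem_union_left _ ?_
      exact Finset.mem_filter.mpr ⟨hb, ⟨hT0Y b hb, hbx⟩⟩
  have hBecard : ((univ.filter fun b => H.Adj x b).erase y0).card = 2 := by
    rw [Finset.card_erase_of_mem (by simp [hadjx.symm]), hdegH x]
  have hT0le : T0.card ≤ Sf.card + 1 := by
    have := Finset.card_le_card hBsub
    have h2 := Finset.card_union_le TY ((univ.filter fun b => H.Adj x b).erase y0)
    omega
  -- nonemptiness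
  have hTYlt : TY.card < Sf.card := by rw [hSfcard]; exact hlt
  have hSfne : ∃ a0, a0 ∈ Sf := by
    have : 0 < Sf.card := by omega
    obtain ⟨a0, ha0⟩ := Finset.card_pos.mp this
    exact ⟨a0, ha0⟩
  obtain ⟨a0, ha0⟩ := hSfne
  have ha0X : a0 ∈ X := (hSfX a0 ha0).1
  have ha0ney0 : a0 ≠ y0 := fun h => ((hXY a0).mp ha0X) (h ▸ hy0)
  have ha0nex : a0 ≠ x := fun h => (hSfX a0 ha0).2 (h ▸ hadjx)
  have hxSf : x ∉ Sf := fun h => (hSfX x h).2 hadjx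
  -- case split
  have hcases : T0.card = Sf.card ∨ T0.card = Sf.card + 1 := by omega
  rcases hcases with hc1 | hc2
  · -- CASE 1 : tight, S ∪ T0 closed in G - x
    have hsum_eq : ∑ b ∈ T0, (Sf.filter fun a => H.Adj a b).card = 3 * T0.card := by
      rw [hc1, ← hpairs2, hpairs1]
    have hall3 : ∀ b ∈ T0, (Sf.filter fun a => H.Adj a b).card = 3 := by
      by_contra hcon
      push_neg at hcon
      obtain ⟨b0, hb0, hneq⟩ := hcon
      have hlt' : ∑ b ∈ T0, (Sf.filter fun a => H.Adj a b).card < ∑ _b ∈ T0, 3 :=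
        Finset.sum_lt_sum hin_le ⟨b0, hb0, lt_of_le_of_ne (hin_le b0 hb0) hneq⟩
      rw [Finset.sum_const, smul_eq_mul, mul_comm] at hlt'
      omega
    have hclosedT : ∀ b ∈ T0, ∀ c, H.Adj b c → c ∈ Sf := by
      intro b hb c hc
      have hequl : Sf.filter (fun a => H.Adj a b) = univ.filter (fun a => H.Adj b a) := by
        apply Finset.eq_of_subset_of_card_le
        · intro a ha
          simp only [mem_filter, mem_univ, true_and] at ha ⊢
          exact ha.2.symm
        · rw [hdegH b, hall3 b hb]
      have : c ∈ univ.filter (fun a => H.Adj b a) := by simp [hc]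
      rw [← hequl] at this
      exact (Finset.mem_filter.mp this).1
    -- witness outside : another neighbor of y0
    have hwex : ∃ w, H.Adj y0 w ∧ w ≠ x := by
      have hcard2 : ((univ.filter fun b => H.Adj y0 b).erase x).card = 2 := by
        rw [Finset.card_erase_of_mem (by simp [hadjx]), hdegH y0]
      obtain ⟨w, hw⟩ := Finset.card_pos.mp (by omega : 0 < ((univ.filter fun b => H.Adj y0 b).erase x).card)
      refine ⟨w, ?_, (Finset.mem_erase.mp hw).1⟩
      have := (Finset.mem_erase.mp hw).2
      simp only [mem_filter, mem_univ, true_and] at this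
      exact this
    obtain ⟨w, hwadj, hwx⟩ := hwex
    have hwX : w ∈ X := by
      rcases hbip hwadj with ⟨h1, _⟩ | ⟨_, h2⟩
      · exact absurd hy0 ((hXY y0).mp h1)
      · exact h2
    have hwney0 : w ≠ y0 := fun h => ((hXY w).mp hwX) (h ▸ hy0)
    have hwSf : w ∉ Sf := fun h => (hSfX w h).2 hwadj
    have hwT0 : w ∉ T0 := fun h => ((hXY w).mp hwX) (hT0Y w h)
    -- the connectivity contradiction
    have hconn := hG2conn.2 ⟨x, hxney0⟩
    refine adj_closed_contra _ {z : ↥{u : ↥{u : V | u ≠ y0} | u ≠ ⟨x, hxney0⟩} |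
        (z.val.val ∈ Sf ∨ z.val.val ∈ T0)} ?_
      ⟨⟨a0, ha0ney0⟩, fun h => ha0nex (congrArg Subtype.val h)⟩
      ⟨⟨w, hwney0⟩, fun h => hwx (congrArg Subtype.val h)⟩
      (Or.inl ha0) (fun hmem => by
        rcases hmem with h | h
        · exact hwSf h
        · exact hwT0 h) hconn
    intro z z' hadj hz
    have hH : H.Adj z.val.val z'.val.val := hadj
    rcases hz with h | h
    · exact Or.inr ((hT0mem _).mpr ⟨z.val.val, h, hH⟩)
    · exact Or.inl (hclosedT _ h _ hH)
  · -- CASE 2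
    set Be := (univ.filter fun b => H.Adj x b).erase y0 with hBe
    have hTYsub : TY ⊆ T0 := Finset.filter_subset _ _
    have hsdiff : T0 \ TY = Be := by
      apply Finset.eq_of_subset_of_card_le
      · intro b hb
        obtain ⟨hbT, hbTY⟩ := Finset.mem_sdiff.mp hb
        by_cases hbx : H.Adj x b
        · exact Finset.mem_erase.mpr ⟨fun h => hy0T0 (h ▸ hbT), by simp [hbx]⟩
        · exact absurd (Finset.mem_filter.mpr ⟨hbT, ⟨hT0Y b hbT, hbx⟩⟩) hbTY
      · rw [Finset.card_sdiff_of_subset hTYsub, hBecard]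
        omega
    have hBeT0 : Be ⊆ T0 := by
      rw [← hsdiff]
      exact Finset.sdiff_subset
    -- split neighborhoods of b ∈ T0
    have hsplit : ∀ b ∈ T0, (Sf.filter fun a => H.Adj a b).card
        + ((if H.Adj b x then 1 else 0)
        + (univ.filter fun c => H.Adj b c ∧ c ∉ Sf ∧ c ≠ x).card) = 3 := by
      intro b _
      have e0 : Sf.filter (fun a => H.Adj a b) = (univ.filter fun c => H.Adj b c).filter (fun c => c ∈ Sf) := by
        ext c
        simp only [mem_filter, mem_univ, true_and]
        exact ⟨fun h => ⟨h.2.symm, h.1⟩, fun h => ⟨h.2, h.1.symm⟩⟩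
      have e1 := Finset.card_filter_add_card_filter_not
        (s := univ.filter fun c => H.Adj b c) (p := fun c => c ∈ Sf)
      have e2 := Finset.card_filter_add_card_filter_not
        (s := (univ.filter fun c => H.Adj b c).filter (fun c => ¬ c ∈ Sf)) (p := fun c => c = x)
      have e3 : ((univ.filter fun c => H.Adj b c).filter (fun c => ¬ c ∈ Sf)).filter (fun c => c = x)
          = if H.Adj b x then {x} else ∅ := by
        by_cases hbx : H.Adj b x
        · rw [if_pos hbx]
          ext c
          simp only [mem_filter, mem_univ, true_and, Finset.mem_singleton]
          constructor
          · exact fun h => h.2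
          · rintro rfl
            exact ⟨⟨hbx, hxSf⟩, rfl⟩
        · rw [if_neg hbx]
          ext c
          simp only [mem_filter, mem_univ, true_and, Finset.notMem_empty, iff_false, not_and]
          rintro ⟨h1, _⟩ rfl
          exact hbx h1
      have e4 : ((univ.filter fun c => H.Adj b c).filter (fun c => ¬ c ∈ Sf)).filter (fun c => ¬ c = x)
          = univ.filter fun c => H.Adj b c ∧ c ∉ Sf ∧ c ≠ x := by
        ext c
        simp only [mem_filter, mem_univ, true_and]
        tauto
      rw [e0]
      rw [hdegH b] at e1
      rw [e3, e4] at e2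
      have e5 : (if H.Adj b x then ({x} : Finset V) else ∅).card = if H.Adj b x then 1 else 0 := by
        by_cases hbx : H.Adj b x <;> simp [hbx]
      omega
    have hsumsplit : ∑ b ∈ T0, ((Sf.filter fun a => H.Adj a b).card
        + ((if H.Adj b x then 1 else 0)
        + (univ.filter fun c => H.Adj b c ∧ c ∉ Sf ∧ c ≠ x).card)) = 3 * T0.card := by
      rw [Finset.sum_congr rfl hsplit, Finset.sum_const, smul_eq_mul, mul_comm]
    rw [Finset.sum_add_distrib, Finset.sum_add_distrib] at hsumsplit
    have hsum_in : ∑ b ∈ T0, (Sf.filter fun a => H.Adj a b).card = 3 * Sf.card := by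
      rw [← hpairs1, hpairs2]
    have hsum_x : ∑ b ∈ T0, (if H.Adj b x then 1 else 0) = 2 := by
      have : T0.filter (fun b => H.Adj b x) = Be := by
        ext b
        simp only [mem_filter]
        constructor
        · rintro ⟨hbT, hbx⟩
          exact Finset.mem_erase.mpr ⟨fun h => hy0T0 (h ▸ hbT), by simp [hbx.symm]⟩
        · intro hb
          refine ⟨hBeT0 hb, ?_⟩
          have := (Finset.mem_erase.mp hb).2
          simp only [mem_filter, mem_univ, true_and] at this
          exact this.symm
      rw [Finset.sum_boole]
      norm_cast
      rw [this, hBecard]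
    have hsum_out : ∑ b ∈ T0, (univ.filter fun c => H.Adj b c ∧ c ∉ Sf ∧ c ≠ x).card = 1 := by
      omega
    obtain ⟨t0, ht0T, ht0card, ht0zero⟩ := sum_eq_one_exists hsum_out
    obtain ⟨u, hu⟩ := Finset.card_eq_one.mp ht0card
    have huprop : H.Adj t0 u ∧ u ∉ Sf ∧ u ≠ x := by
      have : u ∈ univ.filter fun c => H.Adj t0 c ∧ c ∉ Sf ∧ c ≠ x := by
        rw [hu]; exact Finset.mem_singleton_self u
      simpa using this
    have huX : u ∈ X := by
      rcases hbip huprop.1 with ⟨h1, _⟩ | ⟨_, h2⟩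
      · exact absurd (hT0Y t0 ht0T) ((hXY t0).mp h1)
      · exact h2
    have huney0 : u ≠ y0 := fun h => ((hXY u).mp huX) (h ▸ hy0)
    have hkey : ∀ b ∈ T0, ∀ c, H.Adj b c → c ∉ Sf → c ≠ x → c = u := by
      intro b hb c hc hcS hcx
      by_cases hbt : b = t0
      · subst hbt
        have : c ∈ univ.filter fun c => H.Adj b c ∧ c ∉ Sf ∧ c ≠ x := by simp [hc, hcS, hcx]
        rw [hu] at this
        exact Finset.mem_singleton.mp this
      · have h0 := ht0zero b hb hbt
        have : c ∈ univ.filter fun c' => H.Adj b c' ∧ c' ∉ Sf ∧ c' ≠ x := by simp [hc, hcS, hcx]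
        rw [Finset.card_eq_zero.mp h0] at this
        exact absurd this (Finset.notMem_empty c)
    -- witness w ∈ N(y0), w ≠ x, w ≠ u
    have hwex : ∃ w, H.Adj y0 w ∧ w ≠ x ∧ w ≠ u := by
      by_contra hcon
      push_neg at hcon
      have hsubA : (univ.filter fun b => H.Adj y0 b) ⊆ insert x {u} := by
        intro w hw
        simp only [mem_filter, mem_univ, true_and] at hw
        by_cases h1 : w = x
        · simp [h1]
        · simp [hcon w hw h1]
      have := Finset.card_le_card hsubA
      rw [hdegH y0] at this
      have : (insert x ({u} : Finset V)).card ≤ 2 := Finset.card_insert_le x {u}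
      omega
    obtain ⟨w, hwadj, hwx, hwu⟩ := hwex
    have hwX : w ∈ X := by
      rcases hbip hwadj with ⟨h1, _⟩ | ⟨_, h2⟩
      · exact absurd hy0 ((hXY y0).mp h1)
      · exact h2
    have hwney0 : w ≠ y0 := fun h => ((hXY w).mp hwX) (h ▸ hy0)
    have hwSf : w ∉ Sf := fun h => (hSfX w h).2 hwadj
    have hwT0 : w ∉ T0 := fun h => ((hXY w).mp hwX) (hT0Y w h)
    -- connectivity contradiction at u
    have hconn := hG2conn.2 ⟨u, huney0⟩
    refine adj_closed_contra _ {z : ↥{v : ↥{v : V | v ≠ y0} | v ≠ ⟨u, huney0⟩} |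
        (z.val.val ∈ Sf ∨ z.val.val ∈ T0 ∨ z.val.val = x)} ?_
      ⟨⟨a0, ha0ney0⟩, fun h => (huprop.2.1 (by
        have h2 : a0 = u := congrArg Subtype.val h
        exact h2 ▸ ha0))⟩
      ⟨⟨w, hwney0⟩, fun h => hwu (congrArg Subtype.val h)⟩
      (Or.inl ha0) (fun hmem => by
        rcases hmem with h | h | h
        · exact hwSf h
        · exact hwT0 h
        · exact hwx h) hconn
    intro z z' hadj hz
    have hH : H.Adj z.val.val z'.val.val := hadj
    have hz'ney0 : z'.val.val ≠ y0 := z'.val.2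
    have hz'neu : z'.val.val ≠ u := fun h => z'.2 (Subtype.ext h)
    rcases hz with h | h | h
    · exact Or.inr (Or.inl ((hT0mem _).mpr ⟨z.val.val, h, hH⟩))
    · by_cases hcS : z'.val.val ∈ Sf
      · exact Or.inl hcS
      · by_cases hcx : z'.val.val = x
        · exact Or.inr (Or.inr hcx)
        · exact absurd (hkey _ h _ hH hcS hcx) hz'neu
    · refine Or.inr (Or.inl (hBeT0 ?_))
      refine Finset.mem_erase.mpr ⟨hz'ney0, ?_⟩
      simp only [mem_filter, mem_univ, true_and]
      exact h ▸ hH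
end

section
open SimpleGraph
variable {V : Type} [Fintype V]

private lemma card_univ_subtype (s : Set V) {ft : Fintype ↥s} :
    (@univ ↥s ft).card = (univ.filter (fun w => w ∈ s)).card := by
  classical
  rw [← Finset.card_image_of_injective (f := (Subtype.val : ↥s → V)) (@univ ↥s ft)
    Subtype.val_injective]
  congr 1
  ext w
  simp

private lemma card_univ_subtype' (s : Set V) {ft : Fintype ↥s} (F : Finset V)
    (h : ∀ w, w ∈ F ↔ w ∈ s) : (@univ ↥s ft).card = F.card := by
  classical
  rw [← Finset.card_image_of_injective (f := (Subtype.val : ↥s → V)) (@univ ↥s ft)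
    Subtype.val_injective]
  congr 1
  ext w
  simp [h w]

private lemma exists_near_two_factor (H : SimpleGraph V)
    (X Y : Set V) (hpart : ∀ v : V, (v ∈ X ∧ v ∉ Y) ∨ (v ∈ Y ∧ v ∉ X))
    (hbip : ∀ ⦃u v⦄, H.Adj u v → (u ∈ X ∧ v ∈ Y) ∨ (u ∈ Y ∧ v ∈ X))
    (hreg : ∀ v : V, (H.neighborSet v).ncard = 3)
    (y0 : V) (hy0 : y0 ∈ Y)
    (hG2conn : TwoConnected (H.induce {u | u ≠ y0})) :
    ∃ M : (H.induce {u | u ≠ y0}).Subgraph,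
        IsTwoRegularSub (H.induce {u | u ≠ y0}) M ∧
        M.verts.ncard = ({u : V | u ≠ y0}).ncard - 1 := by
  classical
  have hXY := XY_excl hpart
  have hdegH : ∀ a : V, (univ.filter fun b => H.Adj a b).card = 3 := by
    intro a
    have := hreg a
    rw [show H.neighborSet a = {b | H.Adj a b} from rfl, ncard_nbr_eq_filter] at this
    exact this
  -- pick x, a neighbor of y0
  have hxex : ∃ x, H.Adj y0 x := by
    obtain ⟨x, hx⟩ := Finset.card_pos.mp (by rw [hdegH y0]; omega)
    simp only [mem_filter, mem_univ, true_and] at hx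
    exact ⟨x, hx⟩
  obtain ⟨x, hadjx⟩ := hxex
  have hxX : x ∈ X := by
    rcases hbip hadjx with ⟨h1, _⟩ | ⟨_, h2⟩
    · exact absurd hy0 ((hXY y0).mp h1)
    · exact h2
  have hxney0 : x ≠ y0 := fun h => ((hXY x).mp hxX) (h ▸ hy0)
  set X' : Set V := {w : V | w ∈ X ∧ ¬ H.Adj y0 w} with hX'
  set Y' : Set V := {w : V | w ∈ Y ∧ ¬ H.Adj x w} with hY'
  -- Hall's theorem
  set t : ↥X' → Finset V := fun v =>
    (univ.filter fun b => H.Adj v.val b).filter (fun b => b ∈ Y') with ht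
  have hall : ∀ s : Finset ↥X', s.card ≤ (s.biUnion t).card := fun s =>
    hall_condition H X Y hpart hbip hdegH y0 x hy0 hadjx hG2conn s
  obtain ⟨f, hfinj, hft⟩ := (Finset.all_card_le_biUnion_card_iff_exists_injective t).mp hall
  have hfprop : ∀ v : ↥X', H.Adj v.val (f v) ∧ f v ∈ Y' := by
    intro v
    have := hft v
    rw [ht] at this
    simp only [mem_filter, mem_univ, true_and] at this
    exact this
  -- cardinalities
  have hXcard : (univ.filter fun w : V => w ∈ X).card = (univ.filter fun w : V => w ∈ Y).card := by
    have hXiff : ∀ a b : V, H.Adj a b → ((a ∈ X) ↔ ¬ (b ∈ X)) := by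
      intro a b hab
      rcases hbip hab with ⟨ha, hb⟩ | ⟨ha, hb⟩
      · exact ⟨fun _ hbX => ((hXY b).mp hbX) hb, fun _ => ha⟩
      · constructor
        · intro haX; exact absurd ha ((hXY a).mp haX)
        · intro hnb; exact absurd hb hnb
    have hsum := bip_deg_sum H.Adj (fun a b h => h.symm) (fun w => w ∈ X) hXiff
    rw [Finset.sum_congr rfl (fun a _ => hdegH a), Finset.sum_congr rfl (fun a _ => hdegH a),
      Finset.sum_const, Finset.sum_const, smul_eq_mul, smul_eq_mul] at hsum
    have hfilter : (univ.filter fun w : V => ¬ (fun w : V => w ∈ X) w)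
        = (univ.filter fun w : V => w ∈ Y) := by
      ext w; simp only [mem_filter, mem_univ, true_and]
      constructor
      · intro h
        rcases hpart w with ⟨h1, _⟩ | ⟨h1, _⟩
        · exact absurd h1 h
        · exact h1
      · intro h hX; exact (hXY w).mp hX h
    rw [hfilter] at hsum
    omega
  have hAsubX : (univ.filter fun b => H.Adj y0 b) ⊆ (univ.filter fun w : V => w ∈ X) := by
    intro b hb
    simp only [mem_filter, mem_univ, true_and] at hb ⊢
    rcases hbip hb with ⟨h1, _⟩ | ⟨_, h2⟩
    · exact absurd hy0 ((hXY y0).mp h1)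
    · exact h2
  have hBsubY : (univ.filter fun b => H.Adj x b) ⊆ (univ.filter fun w : V => w ∈ Y) := by
    intro b hb
    simp only [mem_filter, mem_univ, true_and] at hb ⊢
    rcases hbip hb with ⟨_, h2⟩ | ⟨h1, _⟩
    · exact h2
    · exact absurd h1 ((hXY x).mp hxX)
  have hX'card : (univ.filter fun w : V => w ∈ X').card
      = (univ.filter fun w : V => w ∈ X).card - 3 := by
    have heq : (univ.filter fun w : V => w ∈ X')
        = (univ.filter fun w : V => w ∈ X) \ (univ.filter fun b => H.Adj y0 b) := by
      ext w
      simp only [Finset.mem_sdiff, mem_filter, mem_univ, true_and, hX', Set.mem_setOf_eq]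
    rw [heq, Finset.card_sdiff_of_subset hAsubX, hdegH y0]
  have hY'card : (univ.filter fun w : V => w ∈ Y').card
      = (univ.filter fun w : V => w ∈ Y).card - 3 := by
    have heq : (univ.filter fun w : V => w ∈ Y')
        = (univ.filter fun w : V => w ∈ Y) \ (univ.filter fun b => H.Adj x b) := by
      ext w
      simp only [Finset.mem_sdiff, mem_filter, mem_univ, true_and, hY', Set.mem_setOf_eq]
    rw [heq, Finset.card_sdiff_of_subset hBsubY, hdegH x]
  -- surjectivity of f
  have himage : (univ : Finset ↥X').image f = univ.filter (fun w : V => w ∈ Y') := by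
    apply Finset.eq_of_subset_of_card_le
    · intro b hb
      obtain ⟨v, _, rfl⟩ := Finset.mem_image.mp hb
      simp only [mem_filter, mem_univ, true_and]
      exact (hfprop v).2
    · rw [Finset.card_image_of_injective _ hfinj,
        card_univ_subtype' X' (univ.filter fun w : V => w ∈ X') (fun w => by simp),
        hX'card, hY'card, hXcard]
  have hsurj : ∀ y ∈ Y', ∃ v : ↥X', f v = y := by
    intro y hyY
    have : y ∈ (univ : Finset ↥X').image f := by
      rw [himage]
      simp [hyY]
    obtain ⟨v, _, hv⟩ := Finset.mem_image.mp this
    exact ⟨v, hv⟩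
  -- the replacement function g
  set g : V → V := fun w => if h : w ∈ X' then f ⟨w, h⟩ else w with hgdef
  have hgmem : ∀ w (h : w ∈ X'), H.Adj w (g w) ∧ g w ∈ Y' := by
    intro w h
    have : g w = f ⟨w, h⟩ := by rw [hgdef]; exact dif_pos h
    rw [this]
    exact hfprop ⟨w, h⟩
  have hginj : ∀ w1 w2, w1 ∈ X' → w2 ∈ X' → g w1 = g w2 → w1 = w2 := by
    intro w1 w2 h1 h2 hg
    have e1 : g w1 = f ⟨w1, h1⟩ := by rw [hgdef]; exact dif_pos h1
    have e2 : g w2 = f ⟨w2, h2⟩ := by rw [hgdef]; exact dif_pos h2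
    rw [e1, e2] at hg
    exact congrArg Subtype.val (hfinj hg)
  -- define the subgraph
  refine ⟨⟨{v : ↥{u : V | u ≠ y0} | v.val ≠ x},
    fun a b => H.Adj a.val b.val ∧ a.val ≠ x ∧ b.val ≠ x ∧
      ¬(a.val ∈ X' ∧ g a.val = b.val) ∧ ¬(b.val ∈ X' ∧ g b.val = a.val),
    fun h => h.1, fun h => h.2.1,
    ⟨fun a b h => ⟨h.1.symm, h.2.2.1, h.2.1, h.2.2.2.2, h.2.2.2.1⟩⟩⟩, ?_, ?_⟩
  · -- two-regularity
    intro v hv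
    have hwx : v.val ≠ x := hv
    have hwy0 : v.val ≠ y0 := v.2
    set w : V := v.val with hwdef
    have hncard_img : (Subtype.val '' {b : ↥{u : V | u ≠ y0} |
        H.Adj w b.val ∧ w ≠ x ∧ b.val ≠ x ∧
        ¬(w ∈ X' ∧ g w = b.val) ∧ ¬(b.val ∈ X' ∧ g b.val = w)}).ncard
        = ({b : ↥{u : V | u ≠ y0} |
        H.Adj w b.val ∧ w ≠ x ∧ b.val ≠ x ∧
        ¬(w ∈ X' ∧ g w = b.val) ∧ ¬(b.val ∈ X' ∧ g b.val = w)}).ncard :=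
      Set.ncard_image_of_injective _ Subtype.val_injective
    have himgdesc : Subtype.val '' {b : ↥{u : V | u ≠ y0} |
        H.Adj w b.val ∧ w ≠ x ∧ b.val ≠ x ∧
        ¬(w ∈ X' ∧ g w = b.val) ∧ ¬(b.val ∈ X' ∧ g b.val = w)}
        = {b : V | b ≠ y0 ∧ H.Adj w b ∧ w ≠ x ∧ b ≠ x ∧
        ¬(w ∈ X' ∧ g w = b) ∧ ¬(b ∈ X' ∧ g b = w)} := by
      ext b
      constructor
      · rintro ⟨z, hz, rfl⟩
        exact ⟨z.2, hz⟩
      · rintro ⟨hb, h2⟩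
        exact ⟨⟨b, hb⟩, h2, rfl⟩
    have hcompute : ∀ e : V, H.Adj w e → ({b : V | H.Adj w b} \ {e}).ncard = 2 := by
      intro e he
      rw [Set.ncard_diff_singleton_of_mem (show e ∈ {b : V | H.Adj w b} from he),
        show ({b : V | H.Adj w b} : Set V) = H.neighborSet w from rfl, hreg w]
    -- the goal is about the neighborSet of the constructed subgraph
    show ({b : ↥{u : V | u ≠ y0} |
        H.Adj w b.val ∧ w ≠ x ∧ b.val ≠ x ∧
        ¬(w ∈ X' ∧ g w = b.val) ∧ ¬(b.val ∈ X' ∧ g b.val = w)}).ncard = 2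
    rw [← hncard_img, himgdesc]
    -- case analysis
    rcases hpart w with ⟨hwX, hwY⟩ | ⟨hwY, hwX⟩
    · by_cases hA : H.Adj y0 w
      · -- case (a) : w ∈ X adjacent to y0 ; drop y0
        have heq : {b : V | b ≠ y0 ∧ H.Adj w b ∧ w ≠ x ∧ b ≠ x ∧
            ¬(w ∈ X' ∧ g w = b) ∧ ¬(b ∈ X' ∧ g b = w)}
            = {b : V | H.Adj w b} \ {y0} := by
          ext b
          simp only [Set.mem_setOf_eq, Set.mem_diff, Set.mem_singleton_iff]
          constructor
          · rintro ⟨h1, h2, _⟩; exact ⟨h2, h1⟩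
          · rintro ⟨hadj, hbne⟩
            have hbY : b ∈ Y := by
              rcases hbip hadj with ⟨_, h2⟩ | ⟨h1, _⟩
              · exact h2
              · exact absurd h1 ((hXY w).mp hwX)
            refine ⟨hbne, hadj, hwx, fun h => ((hXY b).mp (h ▸ hxX)) hbY, ?_, ?_⟩
            · rintro ⟨h1, _⟩; exact h1.2 hA
            · rintro ⟨h1, _⟩; exact ((hXY b).mp h1.1) hbY
        rw [heq]
        exact hcompute y0 hA.symm
      · -- case (b) : w ∈ X' ; drop g w
        have hwX' : w ∈ X' := ⟨hwX, hA⟩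
        have heq : {b : V | b ≠ y0 ∧ H.Adj w b ∧ w ≠ x ∧ b ≠ x ∧
            ¬(w ∈ X' ∧ g w = b) ∧ ¬(b ∈ X' ∧ g b = w)}
            = {b : V | H.Adj w b} \ {g w} := by
          ext b
          simp only [Set.mem_setOf_eq, Set.mem_diff, Set.mem_singleton_iff]
          constructor
          · rintro ⟨h1, h2, _, _, h5, _⟩
            exact ⟨h2, fun h => h5 ⟨hwX', h.symm⟩⟩
          · rintro ⟨hadj, hbne⟩
            have hbY : b ∈ Y := by
              rcases hbip hadj with ⟨_, h2⟩ | ⟨h1, _⟩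
              · exact h2
              · exact absurd h1 ((hXY w).mp hwX)
            refine ⟨fun h => hA (h ▸ hadj).symm, hadj, hwx,
              fun h => ((hXY b).mp (h ▸ hxX)) hbY, ?_, ?_⟩
            · rintro ⟨_, h2⟩; exact hbne h2.symm
            · rintro ⟨h1, _⟩; exact ((hXY b).mp h1.1) hbY
        rw [heq]
        exact hcompute (g w) (hgmem w hwX').1
    · by_cases hB : H.Adj x w
      · -- case (c) : w ∈ Y adjacent to x ; drop x
        have heq : {b : V | b ≠ y0 ∧ H.Adj w b ∧ w ≠ x ∧ b ≠ x ∧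
            ¬(w ∈ X' ∧ g w = b) ∧ ¬(b ∈ X' ∧ g b = w)}
            = {b : V | H.Adj w b} \ {x} := by
          ext b
          simp only [Set.mem_setOf_eq, Set.mem_diff, Set.mem_singleton_iff]
          constructor
          · rintro ⟨_, h2, _, h4, _⟩; exact ⟨h2, h4⟩
          · rintro ⟨hadj, hbne⟩
            have hbX : b ∈ X := by
              rcases hbip hadj with ⟨h1, _⟩ | ⟨_, h2⟩
              · exact absurd hwY ((hXY w).mp h1)
              · exact h2
            refine ⟨fun h => ((hXY b).mp hbX) (h ▸ hy0), hadj, hwx, hbne, ?_, ?_⟩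
            · rintro ⟨h1, _⟩; exact ((hXY w).mp h1.1) hwY
            · rintro ⟨h1, h2⟩
              obtain ⟨-, hnadj⟩ := (hgmem b h1).2
              exact hnadj (h2.symm ▸ hB)
        rw [heq]
        exact hcompute x hB.symm
      · -- case (d) : w ∈ Y' ; drop the matched partner s0
        have hwY' : w ∈ Y' := ⟨hwY, hB⟩
        obtain ⟨v0, hv0⟩ := hsurj w hwY'
        set s0 : V := v0.val with hs0
        have hs0X' : s0 ∈ X' := v0.2
        have hgs0 : g s0 = w := by
          have : g s0 = f ⟨s0, hs0X'⟩ := by rw [hgdef]; exact dif_pos hs0X'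
          rw [this]
          rw [show (⟨s0, hs0X'⟩ : ↥X') = v0 from Subtype.ext rfl]
          exact hv0
        have hs0adj : H.Adj w s0 := by
          have := (hgmem s0 hs0X').1
          rw [hgs0] at this
          exact this.symm
        have heq : {b : V | b ≠ y0 ∧ H.Adj w b ∧ w ≠ x ∧ b ≠ x ∧
            ¬(w ∈ X' ∧ g w = b) ∧ ¬(b ∈ X' ∧ g b = w)}
            = {b : V | H.Adj w b} \ {s0} := by
          ext b
          simp only [Set.mem_setOf_eq, Set.mem_diff, Set.mem_singleton_iff]
          constructor
          · rintro ⟨_, h2, _, _, _, h6⟩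
            refine ⟨h2, fun h => h6 ?_⟩
            rw [h]
            exact ⟨hs0X', hgs0⟩
          · rintro ⟨hadj, hbne⟩
            have hbX : b ∈ X := by
              rcases hbip hadj with ⟨h1, _⟩ | ⟨_, h2⟩
              · exact absurd hwY ((hXY w).mp h1)
              · exact h2
            refine ⟨fun h => ((hXY b).mp hbX) (h ▸ hy0), hadj, hwx,
              fun h => hB (h ▸ hadj).symm, ?_, ?_⟩
            · rintro ⟨h1, _⟩; exact ((hXY w).mp h1.1) hwY
            · rintro ⟨h1, h2⟩
              exact hbne (hginj b s0 h1 hs0X' (by rw [h2, hgs0]))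
        rw [heq]
        exact hcompute s0 hs0adj
  · -- cardinality of the vertex set
    have himg : Subtype.val '' {v : ↥{u : V | u ≠ y0} | v.val ≠ x}
        = ({u : V | u ≠ y0} : Set V) \ {x} := by
      ext b
      constructor
      · rintro ⟨z, hz, rfl⟩
        exact ⟨z.2, hz⟩
      · rintro ⟨hb, hbx⟩
        exact ⟨⟨b, hb⟩, hbx, rfl⟩
    have := Set.ncard_image_of_injective {v : ↥{u : V | u ≠ y0} | v.val ≠ x}
      (Subtype.val_injective)
    rw [himg] at this
    show ({v : ↥{u : V | u ≠ y0} | v.val ≠ x}).ncard = ({u : V | u ≠ y0} : Set V).ncard - 1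
    rw [← this, Set.ncard_diff_singleton_of_mem (by exact hxney0)]
end


/-- Deleting a suitable vertex `y0` of `Y` from a 2-connected cubic bipartite graph yields a
graph with no 2-factor, but with a 2-regular subgraph omitting exactly one vertex. -/
theorem bipartite_minus_vertex {V : Type} [Fintype V] (H : SimpleGraph V)
    (X Y : Set V) (hpart : ∀ v : V, (v ∈ X ∧ v ∉ Y) ∨ (v ∈ Y ∧ v ∉ X))
    (hbip : ∀ ⦃u v⦄, H.Adj u v → (u ∈ X ∧ v ∈ Y) ∨ (u ∈ Y ∧ v ∈ X))
    (hreg : ∀ v : V, (H.neighborSet v).ncard = 3)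
    (h2conn : TwoConnected H)
    (y0 : V) (hy0 : y0 ∈ Y)
    (hG2conn : TwoConnected (H.induce {u | u ≠ y0})) :
    (¬ ∃ M : (H.induce {u | u ≠ y0}).Subgraph,
        M.IsSpanning ∧ IsTwoRegularSub (H.induce {u | u ≠ y0}) M) ∧
    (∃ M : (H.induce {u | u ≠ y0}).Subgraph,
        IsTwoRegularSub (H.induce {u | u ≠ y0}) M ∧
        M.verts.ncard = ({u : V | u ≠ y0}).ncard - 1) := by
  exact ⟨no_two_factor H X Y hpart hbip hreg y0 hy0,
    exists_near_two_factor H X Y hpart hbip hreg y0 hy0 hG2conn⟩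
end

section
/- Every connected 3-regular simple graph on n vertices has at most (n-7)/3 cut-edges, provided it has at least one cut-edge. -/
open SimpleGraph Finset

set_option linter.unusedSectionVars false

variable {V : Type} [Fintype V]

lemma aux1 {H : SimpleGraph V} {e : Sym2 V} (he : H.IsBridge e) (hadj : e ∈ H.edgeSet) :
    Nat.card H.ConnectedComponent + 1 ≤ Nat.card (H \ fromEdgeSet {e}).ConnectedComponent := by
  classical
  induction e with
  | h u v =>
  set H2 := H \ fromEdgeSet {s(u,v)} with hH2
  haveI : Fintype H.ConnectedComponent := Fintype.ofFinite _
  haveI : Fintype H2.ConnectedComponent := Fintype.ofFinite _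
  rw [Nat.card_eq_fintype_card, Nat.card_eq_fintype_card]
  have hle : H2 ≤ H := sdiff_le
  let φ : H2.ConnectedComponent → H.ConnectedComponent :=
    ConnectedComponent.map (Hom.ofLE hle)
  have hφ : ∀ w, φ (H2.connectedComponentMk w) = H.connectedComponentMk w := fun w => rfl
  have hsurj : Function.Surjective φ := by
    intro C; exact C.ind fun w => ⟨H2.connectedComponentMk w, hφ w⟩
  have hninj : ¬ Function.Injective φ := by
    intro hinj
    rw [isBridge_iff] at he
    have h1 : φ (H2.connectedComponentMk u) = φ (H2.connectedComponentMk v) := by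
      rw [hφ, hφ]; exact ConnectedComponent.sound hadj.reachable
    exact he (ConnectedComponent.exact (hinj h1))
  exact Nat.succ_le_of_lt (Fintype.card_lt_of_surjective_not_injective φ hsurj hninj)

lemma aux2 {H H' : SimpleGraph V} {e : Sym2 V} (hle : H' ≤ H) (he : H.IsBridge e)
    (hmem : e ∈ H'.edgeSet) : H'.IsBridge e := by
  induction e with
  | h u v =>
    rw [isBridge_iff] at he ⊢
    exact fun hr => he (hr.mono (sdiff_le_sdiff_right hle))

lemma aux3 {H : SimpleGraph V} (S : Finset (Sym2 V)) (hS : ∀ e ∈ S, H.IsBridge e)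
    (hSe : ∀ e ∈ S, e ∈ H.edgeSet) :
    Nat.card H.ConnectedComponent + S.card ≤ Nat.card (H \ fromEdgeSet ↑S).ConnectedComponent := by
  classical
  induction S using Finset.induction_on with
  | empty => simp
  | @insert e S hes ih =>
    have hb : H.IsBridge e := hS e (Finset.mem_insert_self e S)
    have hsplit : H \ fromEdgeSet ↑(insert e S) = (H \ fromEdgeSet ↑S) \ fromEdgeSet {e} := by
      rw [sdiff_sdiff_left]
      congr 1
      rw [Finset.coe_insert, Set.insert_eq, fromEdgeSet_union]
      exact sup_comm _ _
    have hmemS : e ∈ (H \ fromEdgeSet ↑S).edgeSet := by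
      rw [edgeSet_sdiff]
      refine ⟨hSe e (Finset.mem_insert_self e S), ?_⟩
      rw [edgeSet_fromEdgeSet]
      simp [hes]
    have hbridge : (H \ fromEdgeSet ↑S).IsBridge e := aux2 sdiff_le hb hmemS
    calc Nat.card H.ConnectedComponent + (insert e S).card
        = Nat.card H.ConnectedComponent + S.card + 1 := by rw [Finset.card_insert_of_notMem hes]; omega
      _ ≤ Nat.card (H \ fromEdgeSet ↑S).ConnectedComponent + 1 := by
          exact Nat.add_le_add_right (ih (fun f hf => hS f (Finset.mem_insert_of_mem hf))
              (fun f hf => hSe f (Finset.mem_insert_of_mem hf))) 1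
      _ ≤ _ := by rw [hsplit]; exact aux1 hbridge hmemS

lemma aux4 {G : SimpleGraph V} (h : G.Connected) : Nat.card G.ConnectedComponent = 1 := by
  haveI : Nonempty V := h.nonempty
  rw [Nat.card_eq_one_iff_unique]
  constructor
  · constructor
    intro a b
    exact ConnectedComponent.ind₂ (fun v w => ConnectedComponent.sound (h.preconnected v w)) a b
  · exact ⟨G.connectedComponentMk h.nonempty.some⟩


lemma aux5 {H : SimpleGraph V} [DecidableRel H.Adj] (S : Finset V)
    (hcl : ∀ v ∈ S, ∀ w, H.Adj v w → w ∈ S) : ∃ m, ∑ v ∈ S, H.degree v = 2 * m := by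
  classical
  let HK : SimpleGraph V :=
    { Adj := fun a b => H.Adj a b ∧ a ∈ S ∧ b ∈ S
      symm := ⟨fun a b h => ⟨h.1.symm, h.2.2, h.2.1⟩⟩
      loopless := ⟨fun a h => H.loopless.irrefl a h.1⟩ }
  haveI : DecidableRel HK.Adj := fun a b => Classical.dec _
  have hdeg : ∀ v ∈ S, HK.degree v = H.degree v := by
    intro v hv
    unfold SimpleGraph.degree
    congr 1
    ext w
    rw [mem_neighborFinset, mem_neighborFinset]
    exact ⟨fun h => h.1, fun h => ⟨h, hv, hcl v hv w h⟩⟩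
  have hdeg0 : ∀ v ∉ S, HK.degree v = 0 := by
    intro v hv
    unfold SimpleGraph.degree
    rw [Finset.card_eq_zero, Finset.eq_empty_iff_forall_notMem]
    intro w hw
    rw [mem_neighborFinset] at hw
    exact hv hw.2.1
  refine ⟨#HK.edgeFinset, ?_⟩
  rw [Finset.sum_congr rfl hdeg |>.symm,
    Finset.sum_subset (Finset.subset_univ S) (fun v _ hv => hdeg0 v hv)]
  exact HK.sum_degrees_eq_twice_card_edges

lemma aux6 {H : SimpleGraph V} (S : Finset V) (hcl : ∀ v ∈ S, ∀ w, H.Adj v w → w ∈ S)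
    {u w : V} (p : H.Walk u w) (hu : u ∈ S) : w ∈ S := by
  induction p with
  | nil => exact hu
  | cons h p ih => exact ih (hcl _ hu _ h)

lemma aux_arith (s d m : ℕ) (h1 : 1 ≤ s) (h2 : 1 ≤ d) (h3 : 3 * s = 2 * m + d)
    (h4 : 2 * m ≤ s * (s - 1)) : 7 ≤ s + 2 * d := by
  rcases le_or_gt 5 s with h | h
  · omega
  · interval_cases s <;> omega


/-- A connected cubic simple graph on `n` vertices with at least one cut-edge has at most
`(n-7)/3` cut-edges, i.e. `3c + 7 ≤ n` where `c` is the number of cut-edges. -/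
theorem cubic_cut_edge_bound {V : Type} [Fintype V] (G : SimpleGraph V) (n c : ℕ)
    (hn : Fintype.card V = n)
    (hconn : G.Connected)
    (hreg : ∀ v : V, (G.neighborSet v).ncard = 3)
    (hc : {e : Sym2 V | G.IsBridge e}.ncard = c)
    (hpos : 1 ≤ c) :
    3 * c + 7 ≤ n := by
  classical
  subst hn
  set B : Set (Sym2 V) := {e : Sym2 V | G.IsBridge e} with hB
  set GB : SimpleGraph V := fromEdgeSet B with hGB
  set G' : SimpleGraph V := G \ GB with hG'
  haveI : DecidableRel G.Adj := fun a b => Classical.dec _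
  haveI : DecidableRel GB.Adj := fun a b => Classical.dec _
  haveI : DecidableRel G'.Adj := fun a b => Classical.dec _
  -- basic degree facts
  have hGdeg : ∀ v, G.degree v = 3 := by
    intro v
    have := hreg v
    rwa [Set.ncard_eq_toFinset_card'] at this
  have hBadjG : ∀ v w, GB.Adj v w → G.Adj v w := by
    intro v w h
    rw [hGB, fromEdgeSet_adj] at h
    have hb : G.IsBridge s(v, w) := h.1
    exact (hb.reachable_iff_adj).mp (hconn.preconnected v w)
  have hG'adj : ∀ v w, G'.Adj v w ↔ G.Adj v w ∧ ¬ GB.Adj v w := by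
    intro v w; rw [hG', sdiff_adj]
  -- degree splitting
  have hsplitdeg : ∀ v, G'.degree v + GB.degree v = 3 := by
    intro v
    rw [← hGdeg v]
    unfold SimpleGraph.degree
    rw [← Finset.card_union_of_disjoint]
    · congr 1
      ext w
      simp only [Finset.mem_union, mem_neighborFinset]
      rw [hG'adj]
      constructor
      · rintro (⟨h, _⟩ | h)
        · exact h
        · exact hBadjG v w h
      · intro h
        by_cases hb : GB.Adj v w
        · exact Or.inr hb
        · exact Or.inl ⟨h, hb⟩
    · rw [Finset.disjoint_left]
      intro w hw hw'
      rw [mem_neighborFinset] at hw hw'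
      exact ((hG'adj v w).mp hw).2 hw'
  -- total bridge degree = 2c
  have hBedge : GB.edgeSet = B := by
    rw [hGB, edgeSet_fromEdgeSet]
    ext e
    simp only [Set.mem_diff, Set.mem_setOf_eq, and_iff_left_iff_imp]
    intro he
    exact G.not_isDiag_of_mem_edgeSet (by
      induction e with
      | h u v => exact (IsBridge.reachable_iff_adj (G := G) he).mp (hconn.preconnected u v))
  have htot : ∑ v : V, GB.degree v = 2 * c := by
    rw [GB.sum_degrees_eq_twice_card_edges]
    congr 1
    rw [@edgeFinset_card, ← @Nat.card_eq_fintype_card, Nat.card_coe_set_eq, hBedge, hc]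
  -- components
  haveI : Fintype G'.ConnectedComponent := Fintype.ofFinite _
  set supp : G'.ConnectedComponent → Finset V :=
    fun K => Finset.univ.filter (fun v => G'.connectedComponentMk v = K) with hsuppdef
  have hmem_supp : ∀ K v, v ∈ supp K ↔ G'.connectedComponentMk v = K := by
    intro K v; simp [hsuppdef]
  have hclosed : ∀ K, ∀ v ∈ supp K, ∀ w, G'.Adj v w → w ∈ supp K := by
    intro K v hv w hadj
    rw [hmem_supp] at hv ⊢
    rw [← hv]
    exact (ConnectedComponent.sound hadj.reachable).symm
  have hsum_fiber : ∀ f : V → ℕ, ∑ K, ∑ v ∈ supp K, f v = ∑ v, f v := by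
    intro f
    exact Finset.sum_fiberwise _ _ _
  -- key per-component bound
  have key : ∀ K, 7 ≤ (supp K).card + 2 * ∑ v ∈ supp K, GB.degree v := by
    intro K
    obtain ⟨v₀, hv₀⟩ := K.exists_rep
    have hv₀' : v₀ ∈ supp K := (hmem_supp K v₀).mpr hv₀
    have hs1 : 1 ≤ (supp K).card := Finset.card_pos.mpr ⟨v₀, hv₀'⟩
    obtain ⟨m, hm⟩ := aux5 (supp K) (hclosed K)
    have h3 : 3 * (supp K).card = 2 * m + ∑ v ∈ supp K, GB.degree v := by
      rw [← hm, ← Finset.sum_add_distrib,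
        Finset.sum_congr rfl (fun v _ => hsplitdeg v), Finset.sum_const, smul_eq_mul, mul_comm]
    have hdegbound : 2 * m ≤ (supp K).card * ((supp K).card - 1) := by
      rw [← hm]
      have hb : ∀ v ∈ supp K, G'.degree v ≤ (supp K).card - 1 := by
        intro v hv
        have hsub : G'.neighborFinset v ⊆ (supp K).erase v := by
          intro w hw
          rw [mem_neighborFinset] at hw
          exact Finset.mem_erase.mpr ⟨fun h => G'.loopless.irrefl v (h ▸ hw), hclosed K v hv w hw⟩
        calc G'.degree v ≤ ((supp K).erase v).card := Finset.card_le_card hsub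
          _ = (supp K).card - 1 := Finset.card_erase_of_mem hv
      have := Finset.sum_le_card_nsmul (supp K) (fun v => G'.degree v) ((supp K).card - 1) hb
      simpa [smul_eq_mul] using this
    have hd1 : 1 ≤ ∑ v ∈ supp K, GB.degree v := by
      by_contra hcon
      push_neg at hcon
      have hzero : ∀ v ∈ supp K, GB.degree v = 0 := by
        intro v hv
        have := Finset.sum_eq_zero_iff.mp (Nat.lt_one_iff.mp hcon)
        exact this v hv
      have hclG : ∀ v ∈ supp K, ∀ w, G.Adj v w → w ∈ supp K := by
        intro v hv w hadj
        by_cases hbw : GB.Adj v w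
        · exfalso
          have hwmem : w ∈ GB.neighborFinset v := (mem_neighborFinset _ _ _).mpr hbw
          have h0 := hzero v hv
          unfold SimpleGraph.degree at h0
          rw [Finset.card_eq_zero] at h0
          rw [h0] at hwmem
          exact absurd hwmem (Finset.notMem_empty w)
        · exact hclosed K v hv w ((hG'adj v w).mpr ⟨hadj, hbw⟩)
      have huniv : supp K = Finset.univ := by
        apply Finset.eq_univ_iff_forall.mpr
        intro w
        obtain ⟨p⟩ := hconn.preconnected v₀ w
        exact aux6 (supp K) hclG p hv₀'
      have h2c : (2:ℕ) * c = 0 := by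
        rw [← htot, ← Finset.sum_eq_zero_iff.mpr]
        intro v hv
        exact hzero v (huniv ▸ hv)
      omega
    exact aux_arith _ _ m hs1 hd1 h3 hdegbound
  -- number of components ≥ c + 1
  have ht : c + 1 ≤ Fintype.card G'.ConnectedComponent := by
    have h0 := aux3 (H := G) B.toFinset (by intro e he; rw [Set.mem_toFinset] at he; exact he)
      (by
        intro e he; rw [Set.mem_toFinset] at he
        induction e with
        | h u v => exact (IsBridge.reachable_iff_adj (G := G) he).mp (hconn.preconnected u v))
    rw [Set.coe_toFinset, ← hGB, ← hG', aux4 hconn, Nat.card_eq_fintype_card] at h0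
    have hcard : B.toFinset.card = c := by rw [← hc, Set.ncard_eq_toFinset_card']
    omega
  -- final counting
  have final : 7 * Fintype.card G'.ConnectedComponent ≤ Fintype.card V + 4 * c := by
    have hcards : ∑ K, (supp K).card = Fintype.card V := by
      have h1 : ∑ K, (supp K).card = ∑ K, ∑ v ∈ supp K, 1 := by
        refine Finset.sum_congr rfl fun K _ => ?_
        rw [Finset.card_eq_sum_ones]
      rw [h1, hsum_fiber (fun _ => 1), Finset.card_univ.symm, Finset.card_eq_sum_ones]
    calc 7 * Fintype.card G'.ConnectedComponent
        = ∑ _K : G'.ConnectedComponent, 7 := by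
          rw [Finset.sum_const, Finset.card_univ, smul_eq_mul, mul_comm]
      _ ≤ ∑ K, ((supp K).card + 2 * ∑ v ∈ supp K, GB.degree v) :=
          Finset.sum_le_sum (fun K _ => key K)
      _ = ∑ K, (supp K).card + 2 * ∑ K, ∑ v ∈ supp K, GB.degree v := by
          rw [Finset.sum_add_distrib, Finset.mul_sum]
      _ = Fintype.card V + 2 * (2 * c) := by
          rw [hcards, hsum_fiber, htot]
      _ ≤ Fintype.card V + 4 * c := by omega
  omega
end

section
/- Let G be a 3-regular multigraph and S ⊆ V(G) a Tutte set with o(G - S) ≥ |S| + 2 such that exactly three odd components of G - S receive exactly one edge from S and all other odd components receive at least three edges. Then o(G - S) = |S| + 2, G - S has no even components, each other odd component receives exactly three edges from S, and S is an independent set. -/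
open SimpleGraph

/-- The set of edges of `G` joining `S` to the component `C` of `G - S`. -/
def crossEdges {V : Type} (G : SimpleGraph V) (S : Set V)
    (C : (G.induce Sᶜ).ConnectedComponent) : Set (Sym2 V) :=
  {e | ∃ u v, e = s(u, v) ∧ G.Adj u v ∧ u ∈ S ∧
    ∃ hv : v ∈ Sᶜ, (⟨v, hv⟩ : ↥(Sᶜ)) ∈ C.supp}

/-- The number of odd components of `G - S`. -/
noncomputable def oddComponents {V : Type} (G : SimpleGraph V) (S : Set V) : ℕ :=
  {C : (G.induce Sᶜ).ConnectedComponent | Odd C.supp.ncard}.ncard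

section Aux

variable {V : Type} (G : SimpleGraph V) (S : Set V)

/-- All edges from `S` to its complement. -/
def eCross : Set (Sym2 V) :=
  {e | ∃ u v, e = s(u, v) ∧ G.Adj u v ∧ u ∈ S ∧ v ∈ Sᶜ}

variable {G S}

lemma endpoint_unique {u v u' v' : V} (hu : u ∈ S) (hv : v ∈ Sᶜ) (hu' : u' ∈ S)
    (hv' : v' ∈ Sᶜ) (h : s(u, v) = s(u', v')) : u = u' ∧ v = v' := by
  rw [Sym2.eq_iff] at h
  rcases h with ⟨rfl, rfl⟩ | ⟨rfl, rfl⟩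
  · exact ⟨rfl, rfl⟩
  · exact absurd hu hv'

lemma crossEdges_disjoint {C C' : (G.induce Sᶜ).ConnectedComponent} (h : C ≠ C') :
    Disjoint (crossEdges G S C) (crossEdges G S C') := by
  rw [Set.disjoint_left]
  rintro e ⟨u, v, rfl, hadj, hu, hv, hvC⟩ ⟨u', v', he', hadj', hu', hv', hv'C⟩
  obtain ⟨rfl, rfl⟩ := endpoint_unique hu hv hu' hv' he'
  rw [SimpleGraph.ConnectedComponent.mem_supp_iff] at hvC hv'C
  exact h (hvC ▸ hv'C ▸ rfl)

lemma eCross_eq_iUnion : eCross G S = ⋃ C, crossEdges G S C := by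
  ext e
  simp only [Set.mem_iUnion]
  constructor
  · rintro ⟨u, v, rfl, hadj, hu, hv⟩
    exact ⟨(G.induce Sᶜ).connectedComponentMk ⟨v, hv⟩, u, v, rfl, hadj, hu, hv,
      (SimpleGraph.ConnectedComponent.mem_supp_iff _ _).2 rfl⟩
  · rintro ⟨C, u, v, rfl, hadj, hu, hv, -⟩
    exact ⟨u, v, rfl, hadj, hu, hv⟩

/-- A walk from a vertex outside `S` to a vertex of `S` yields a cross edge into the
walk's starting component. -/
lemma cross_nonempty_of_walk (C : (G.induce Sᶜ).ConnectedComponent) :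
    ∀ {x s : V} (_ : G.Walk x s), s ∈ S → ∀ (hx : x ∈ Sᶜ),
      (G.induce Sᶜ).connectedComponentMk ⟨x, hx⟩ = C → (crossEdges G S C).Nonempty := by
  intro x s p
  induction p with
  | nil => intro hs hx _; exact absurd hs hx
  | @cons a b c hab q ih =>
    intro hs hx hC
    by_cases hb : b ∈ S
    · refine ⟨s(b, a), b, a, rfl, hab.symm, hb, hx, ?_⟩
      rwa [SimpleGraph.ConnectedComponent.mem_supp_iff]
    · have hb' : b ∈ Sᶜ := hb
      have hadj : (G.induce Sᶜ).Adj ⟨a, hx⟩ ⟨b, hb'⟩ := hab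
      have : (G.induce Sᶜ).connectedComponentMk ⟨b, hb'⟩ = C := by
        rw [← hC]
        exact (SimpleGraph.ConnectedComponent.sound hadj.reachable).symm
      exact ih hs hb' this

lemma reach_of_walk : ∀ {a b : V} (p : G.Walk a b), (∀ x ∈ p.support, x ∈ Sᶜ) →
    ∀ (ha : a ∈ Sᶜ) (hb : b ∈ Sᶜ), (G.induce Sᶜ).Reachable ⟨a, ha⟩ ⟨b, hb⟩ := by
  intro a b p
  induction p with
  | nil => intro _ ha hb; exact SimpleGraph.Reachable.refl _
  | @cons a b c hab q ih =>
    intro hsupp ha hc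
    have hb : b ∈ Sᶜ := hsupp b (by simp [SimpleGraph.Walk.support_cons])
    have hadj : (G.induce Sᶜ).Adj ⟨a, ha⟩ ⟨b, hb⟩ := hab
    exact hadj.reachable.trans (ih (fun x hx => hsupp x (by simp [SimpleGraph.Walk.support_cons, hx])) hb hc)

end Aux

/-- For a connected cubic graph with a Tutte set `S` in which exactly three odd components
receive exactly one edge from `S` and all other odd components receive at least three
edges, equality is forced: `o(G-S) = |S| + 2`, `G - S` has no even components, every other
odd component receives exactly three edges, and `S` is independent. -/
theorem tutte_set_equalities {V : Type} [Fintype V] (G : SimpleGraph V)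
    (hconn : G.Connected)
    (hreg : ∀ v : V, (G.neighborSet v).ncard = 3)
    (S : Set V)
    (htutte : S.ncard + 2 ≤ oddComponents G S)
    (hthree : {C : (G.induce Sᶜ).ConnectedComponent |
        Odd C.supp.ncard ∧ (crossEdges G S C).ncard = 1}.ncard = 3)
    (hrest : ∀ C : (G.induce Sᶜ).ConnectedComponent,
        Odd C.supp.ncard → (crossEdges G S C).ncard ≠ 1 → 3 ≤ (crossEdges G S C).ncard) :
    oddComponents G S = S.ncard + 2 ∧
    (∀ C : (G.induce Sᶜ).ConnectedComponent, Odd C.supp.ncard) ∧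
    (∀ C : (G.induce Sᶜ).ConnectedComponent,
        Odd C.supp.ncard → (crossEdges G S C).ncard ≠ 1 → (crossEdges G S C).ncard = 3) ∧
    (∀ u ∈ S, ∀ v ∈ S, ¬ G.Adj u v) := by
  classical
  -- `S` is nonempty
  have hSne : S.Nonempty := by
    rw [Set.nonempty_iff_ne_empty]
    rintro rfl
    -- then the induced graph is connected, so at most one component
    have hsub : Subsingleton (G.induce (∅ : Set V)ᶜ).ConnectedComponent := by
      constructor
      intro C C'
      obtain ⟨⟨v, hv⟩, rfl⟩ := C.exists_rep
      obtain ⟨⟨w, hw⟩, rfl⟩ := C'.exists_rep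
      obtain ⟨p⟩ := hconn.preconnected v w
      exact SimpleGraph.ConnectedComponent.sound
        (reach_of_walk p (fun x _ => by simp) hv hw)
    have h1 : oddComponents G (∅ : Set V) ≤ 1 := by
      unfold _root_.oddComponents
      haveI := hsub
      exact Set.ncard_le_one_of_subsingleton _
    simp [Set.ncard_empty] at htutte
    omega
  obtain ⟨s₀, hs₀⟩ := hSne
  haveI : Fintype (G.induce Sᶜ).ConnectedComponent := Fintype.ofFinite _
  set K := (G.induce Sᶜ).ConnectedComponent
  -- finiteness facts
  have hfinE : (eCross G S).Finite := Set.toFinite _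
  have hfinC : ∀ C : K, (crossEdges G S C).Finite := fun C => Set.toFinite _
  have hfinS : S.Finite := Set.toFinite _
  set sF : Finset V := hfinS.toFinset with hsF
  set EF : Finset (Sym2 V) := hfinE.toFinset with hEF
  -- every component receives a cross edge
  have hne : ∀ C : K, (crossEdges G S C).Nonempty := by
    intro C
    obtain ⟨⟨v, hv⟩, rfl⟩ := C.exists_rep
    obtain ⟨p⟩ := hconn.preconnected v s₀
    exact cross_nonempty_of_walk _ p hs₀ hv rfl
  -- decomposition of eCross as a disjoint union over components
  have hsum : EF.card = ∑ C : K, (crossEdges G S C).ncard := by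
    have hU : EF = Finset.univ.biUnion (fun C : K => (hfinC C).toFinset) := by
      ext e
      simp only [Finset.mem_biUnion, Finset.mem_univ, true_and, Set.Finite.mem_toFinset, hEF]
      rw [show (e ∈ eCross G S ↔ e ∈ ⋃ C, crossEdges G S C) from by rw [eCross_eq_iUnion]]
      simp [Set.mem_iUnion]
      exact Iff.rfl
    rw [hU, Finset.card_biUnion]
    · exact Finset.sum_congr rfl fun C _ => (Set.ncard_eq_toFinset_card _ (hfinC C)).symm
    · intro C _ C' _ hCC'
      rw [Function.onFun, Finset.disjoint_left]
      intro e he he'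
      rw [Set.Finite.mem_toFinset] at he he'
      exact Set.disjoint_left.1 (crossEdges_disjoint hCC') he he'
  -- upper bound on the number of cross edges
  set fcard : V → ℕ := fun u => ((G.neighborFinset u).filter (fun v => v ∈ Sᶜ)).card with hfc
  have hdeg : ∀ u : V, (G.neighborFinset u).card = 3 := by
    intro u
    rw [SimpleGraph.neighborFinset_def, ← Set.ncard_eq_toFinset_card']
    exact hreg u
  have hcover : EF ⊆ sF.biUnion (fun u =>
      ((G.neighborFinset u).filter (fun v => v ∈ Sᶜ)).image (fun v => s(u, v))) := by
    intro e he
    rw [hEF, Set.Finite.mem_toFinset] at he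
    obtain ⟨u, v, rfl, hadj, hu, hv⟩ := he
    refine Finset.mem_biUnion.2 ⟨u, hfinS.mem_toFinset.2 hu, ?_⟩
    exact Finset.mem_image.2 ⟨v, Finset.mem_filter.2 ⟨(G.mem_neighborFinset u v).2 hadj, hv⟩, rfl⟩
  have hEle : EF.card ≤ ∑ u ∈ sF, fcard u :=
    (Finset.card_le_card hcover).trans <|
      (Finset.card_biUnion_le).trans <|
        Finset.sum_le_sum fun u _ => Finset.card_image_le
  have hfcard_le : ∀ u, fcard u ≤ 3 := fun u =>
    (Finset.card_filter_le _ _).trans_eq (hdeg u)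
  have hEle' : EF.card ≤ 3 * S.ncard := by
    calc EF.card ≤ ∑ u ∈ sF, fcard u := hEle
    _ ≤ ∑ u ∈ sF, 3 := Finset.sum_le_sum fun u _ => hfcard_le u
    _ = 3 * S.ncard := by rw [Finset.sum_const, smul_eq_mul, mul_comm,
        Set.ncard_eq_toFinset_card _ hfinS]
  -- the odd components
  set oddF : Finset K := Finset.univ.filter (fun C => Odd C.supp.ncard) with hoddF
  have hocard : oddComponents G S = oddF.card := by
    unfold _root_.oddComponents
    rw [Set.ncard_eq_toFinset_card', Set.toFinset_setOf]
  set AF : Finset K := oddF.filter (fun C => (crossEdges G S C).ncard = 1) with hAF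
  set BF : Finset K := oddF.filter (fun C => ¬ (crossEdges G S C).ncard = 1) with hBF
  have hAcard : AF.card = 3 := by
    rw [← hthree, Set.ncard_eq_toFinset_card', Set.toFinset_setOf]
    congr 1
    ext C
    simp [hAF, hoddF, Finset.mem_filter, and_assoc]
  have hABcard : AF.card + BF.card = oddF.card := Finset.card_filter_add_card_filter_not _
  -- lower bound on the cross-edge sum over odd components
  have hAsum : ∑ C ∈ AF, (crossEdges G S C).ncard = 3 := by
    rw [Finset.sum_congr rfl (fun C hC => (Finset.mem_filter.1 hC).2), Finset.sum_const,
      smul_eq_mul, hAcard]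
  have hBsum_ge : 3 * BF.card ≤ ∑ C ∈ BF, (crossEdges G S C).ncard := by
    calc 3 * BF.card = ∑ _C ∈ BF, 3 := by rw [Finset.sum_const, smul_eq_mul, mul_comm]
    _ ≤ _ := Finset.sum_le_sum fun C hC => by
        obtain ⟨hCodd, hC1⟩ := Finset.mem_filter.1 hC
        exact hrest C (Finset.mem_filter.1 hCodd).2 hC1
  have hoddsum : ∑ C ∈ oddF, (crossEdges G S C).ncard
      = ∑ C ∈ AF, (crossEdges G S C).ncard + ∑ C ∈ BF, (crossEdges G S C).ncard := by
    rw [hAF, hBF, Finset.sum_filter_add_sum_filter_not]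
  have hodd_le_all : ∑ C ∈ oddF, (crossEdges G S C).ncard ≤ ∑ C : K, (crossEdges G S C).ncard :=
    Finset.sum_le_sum_of_subset (Finset.filter_subset _ _)
  -- the chain of inequalities
  have hchain : 3 * (S.ncard + 2) ≤ 3 * oddComponents G S := by omega
  have h3o : 3 * oddComponents G S = 3 + 3 * BF.card + 6 := by
    rw [hocard]
    omega
  have hkey : 3 * oddComponents G S ≤ 3 * S.ncard + 6 := by
    calc 3 * oddComponents G S = 3 + 3 * BF.card + 6 := h3o
    _ ≤ ∑ C ∈ AF, (crossEdges G S C).ncard + ∑ C ∈ BF, (crossEdges G S C).ncard + 6 := by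
        rw [hAsum]; omega
    _ = ∑ C ∈ oddF, (crossEdges G S C).ncard + 6 := by rw [hoddsum]
    _ ≤ ∑ C : K, (crossEdges G S C).ncard + 6 := by omega
    _ = EF.card + 6 := by rw [hsum]
    _ ≤ 3 * S.ncard + 6 := by omega
  -- everything is tight
  have h1 : oddComponents G S = S.ncard + 2 := by omega
  have hEFeq : EF.card = 3 * S.ncard := by
    have h2 : 3 * S.ncard + 6 ≤ EF.card + 6 := by
      calc 3 * S.ncard + 6 = 3 * (S.ncard + 2) := by ring
      _ ≤ 3 * oddComponents G S := hchain
      _ = 3 + 3 * BF.card + 6 := h3o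
      _ ≤ ∑ C ∈ oddF, (crossEdges G S C).ncard + 6 := by rw [hoddsum, hAsum]; omega
      _ ≤ ∑ C : K, (crossEdges G S C).ncard + 6 := by omega
      _ = EF.card + 6 := by rw [hsum]
    omega
  have hodd_eq_all : ∑ C ∈ oddF, (crossEdges G S C).ncard = ∑ C : K, (crossEdges G S C).ncard := by
    have hlow : 3 + 3 * BF.card ≤ ∑ C ∈ oddF, (crossEdges G S C).ncard := by
      rw [hoddsum, hAsum]; omega
    have := hsum
    omega
  have hBsum_eq : ∑ C ∈ BF, (crossEdges G S C).ncard = 3 * BF.card := by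
    have hlow : 3 + 3 * BF.card ≤ ∑ C ∈ oddF, (crossEdges G S C).ncard := by
      rw [hoddsum, hAsum]; omega
    have hup : ∑ C ∈ oddF, (crossEdges G S C).ncard ≤ 3 + 3 * BF.card := by
      have := hsum; omega
    rw [hoddsum, hAsum] at hlow hup
    omega
  refine ⟨h1, ?_, ?_, ?_⟩
  · -- every component is odd
    intro C
    by_contra hC
    have hC0 : (crossEdges G S C).ncard = 0 := by
      have hsplit2 : (∑ C ∈ oddF, (crossEdges G S C).ncard) +
          ∑ C ∈ Finset.univ.filter (fun C : K => ¬ Odd C.supp.ncard),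
            (crossEdges G S C).ncard = ∑ C : K, (crossEdges G S C).ncard :=
        Finset.sum_filter_add_sum_filter_not Finset.univ _ _
      have hnot : ∑ C ∈ Finset.univ.filter (fun C : K => ¬ Odd C.supp.ncard),
          (crossEdges G S C).ncard = 0 := by omega
      exact Finset.sum_eq_zero_iff.1 hnot C (Finset.mem_filter.2 ⟨Finset.mem_univ _, hC⟩)
    have := (hne C).ncard_pos (hfinC C)
    omega
  · -- each non-special odd component has exactly 3 cross edges
    intro C hCodd hC1
    have hCB : C ∈ BF := Finset.mem_filter.2
      ⟨Finset.mem_filter.2 ⟨Finset.mem_univ _, hCodd⟩, hC1⟩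
    by_contra hC3
    have h4 : 4 ≤ (crossEdges G S C).ncard := by
      have := hrest C hCodd hC1; omega
    have : 3 * BF.card < ∑ C ∈ BF, (crossEdges G S C).ncard := by
      calc 3 * BF.card = ∑ _C ∈ BF, 3 := by rw [Finset.sum_const, smul_eq_mul, mul_comm]
      _ < _ := Finset.sum_lt_sum
          (fun D hD => by
            obtain ⟨hDodd, hD1⟩ := Finset.mem_filter.1 hD
            exact hrest D (Finset.mem_filter.1 hDodd).2 hD1)
          ⟨C, hCB, by omega⟩
    omega
  · -- S is independent
    intro u hu v hv hadj
    -- then `fcard u ≤ 2`, contradicting tightness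
    have hfu : fcard u ≤ 2 := by
      have hsub : (G.neighborFinset u).filter (fun w => w ∈ Sᶜ) ⊆
          (G.neighborFinset u).erase v := by
        intro w hw
        obtain ⟨hw1, hw2⟩ := Finset.mem_filter.1 hw
        exact Finset.mem_erase.2 ⟨fun h => hw2 (h ▸ hv), hw1⟩
      calc fcard u ≤ ((G.neighborFinset u).erase v).card := Finset.card_le_card hsub
      _ = (G.neighborFinset u).card - 1 := Finset.card_erase_of_mem
          ((G.mem_neighborFinset u v).2 hadj)
      _ ≤ 2 := by rw [hdeg u]
    have huF : u ∈ sF := hfinS.mem_toFinset.2 hu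
    have hsplit : ∑ w ∈ sF, fcard w = fcard u + ∑ w ∈ sF.erase u, fcard w :=
      (Finset.add_sum_erase _ _ huF).symm
    have herase : ∑ w ∈ sF.erase u, fcard w ≤ 3 * (sF.card - 1) := by
      calc ∑ w ∈ sF.erase u, fcard w ≤ ∑ _w ∈ sF.erase u, 3 :=
        Finset.sum_le_sum fun w _ => hfcard_le w
      _ = 3 * (sF.card - 1) := by
          rw [Finset.sum_const, smul_eq_mul, mul_comm, Finset.card_erase_of_mem huF]
    have hcard : S.ncard = sF.card := Set.ncard_eq_toFinset_card _ hfinS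
    have h1le : 1 ≤ sF.card := Finset.card_pos.2 ⟨u, huF⟩
    omega
end

section
/- If S is a minimal set satisfying o(G - S) ≥ |S| + 2 in a 3-regular multigraph G (a minimal Tutte set), then every vertex of S has its three neighbors in three distinct components of G - S. -/
open SimpleGraph

namespace TutteAux

variable {V : Type} {G : SimpleGraph V} {S : Set V} {x : V}

lemma mem_compl_diff {a : V} (ha : a ∈ Sᶜ) : a ∈ (S \ {x})ᶜ := fun h => ha h.1

/-- The inclusion homomorphism from `G - S` to `G - (S \ {x})`. -/
def incl (G : SimpleGraph V) (S : Set V) (x : V) :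
    G.induce Sᶜ →g G.induce (S \ {x})ᶜ where
  toFun a := ⟨a.1, mem_compl_diff a.2⟩
  map_rel' h := h

lemma incl_inj : Function.Injective (incl G S x) := by
  intro a b h
  have h2 : (incl G S x a).val = (incl G S x b).val := congrArg Subtype.val h
  exact Subtype.ext h2

/-- Walks in `G - (S \ {x})` starting outside `S` either avoid `x` entirely,
or reach a neighbor of `x` while staying outside `S`. -/
lemma avoid {a b : ↥(S \ {x})ᶜ}
    (p : (G.induce (S \ {x})ᶜ).Walk a b) :
    ∀ ha : a.1 ∈ Sᶜ,
    (∃ hb : b.1 ∈ Sᶜ,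
        (G.induce Sᶜ).Reachable ⟨a.1, ha⟩ ⟨b.1, hb⟩) ∨
    (∃ w, ∃ hw : w ∈ Sᶜ, G.Adj x w ∧
        (G.induce Sᶜ).Reachable ⟨a.1, ha⟩ ⟨w, hw⟩) := by
  induction p with
  | nil => intro ha; exact Or.inl ⟨ha, Reachable.refl _⟩
  | cons h p ih =>
    rename_i a c b
    intro ha
    have hGadj : G.Adj a.1 c.1 := h
    by_cases hc : c.1 ∈ Sᶜ
    · have hadj' : (G.induce Sᶜ).Adj ⟨a.1, ha⟩ ⟨c.1, hc⟩ := hGadj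
      rcases ih hc with ⟨hb, hr⟩ | ⟨w, hw, hadj, hr⟩
      · exact Or.inl ⟨hb, hadj'.reachable.trans hr⟩
      · exact Or.inr ⟨w, hw, hadj, hadj'.reachable.trans hr⟩
    · have hcS : c.1 ∈ S := not_not.mp (by simpa using hc)
      have hcx : c.1 = x := by
        by_contra hne
        exact c.2 ⟨hcS, hne⟩
      rw [hcx] at hGadj
      exact Or.inr ⟨a.1, ha, hGadj.symm, Reachable.refl _⟩

/-- If no neighbor of `x` lies in the component `C` of `G - S`, then the image of `C`
in `G - (S \ {x})` has the same support (up to the inclusion). -/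
lemma supp_map_of_untouched (C : (G.induce Sᶜ).ConnectedComponent)
    (hC : ∀ w, ∀ hw : w ∈ Sᶜ, G.Adj x w →
      (G.induce Sᶜ).connectedComponentMk ⟨w, hw⟩ ≠ C) :
    (C.map (incl G S x)).supp = (incl G S x) '' C.supp := by
  obtain ⟨u, rfl⟩ : ∃ u, C = (G.induce Sᶜ).connectedComponentMk u :=
    C.exists_rep.imp fun u h => h.symm
  ext z
  constructor
  · intro hz
    rw [ConnectedComponent.mem_supp_iff, ConnectedComponent.map_mk,
      ConnectedComponent.eq] at hz
    obtain ⟨p⟩ := hz.symm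
    have hu : (incl G S x u).1 ∈ Sᶜ := u.2
    have hEq : (⟨(incl G S x u).1, hu⟩ : ↥Sᶜ) = u := Subtype.ext rfl
    rcases avoid p hu with ⟨hb, hr⟩ | ⟨w, hw, hadj, hr⟩
    · refine ⟨⟨z.1, hb⟩, ?_, Subtype.ext rfl⟩
      rw [ConnectedComponent.mem_supp_iff, ConnectedComponent.eq]
      exact (hEq ▸ hr).symm
    · exact absurd (ConnectedComponent.eq.mpr (hEq ▸ hr).symm) (hC w hw hadj)
  · rintro ⟨y, hy, rfl⟩
    rw [ConnectedComponent.mem_supp_iff] at hy ⊢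
    rw [← hy, ConnectedComponent.map_mk]

/-- If no neighbor of `x` lies in `C`, then `C` is determined by its image. -/
lemma map_eq_of_untouched {C D : (G.induce Sᶜ).ConnectedComponent}
    (hC : ∀ w, ∀ hw : w ∈ Sᶜ, G.Adj x w →
      (G.induce Sᶜ).connectedComponentMk ⟨w, hw⟩ ≠ C)
    (h : C.map (incl G S x) = D.map (incl G S x)) : C = D := by
  obtain ⟨u, rfl⟩ : ∃ u, C = (G.induce Sᶜ).connectedComponentMk u :=
    C.exists_rep.imp fun u h => h.symm
  obtain ⟨v, rfl⟩ : ∃ v, D = (G.induce Sᶜ).connectedComponentMk v :=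
    D.exists_rep.imp fun v h => h.symm
  rw [ConnectedComponent.map_mk, ConnectedComponent.map_mk,
    ConnectedComponent.eq] at h
  obtain ⟨p⟩ := h
  have hu : (incl G S x u).1 ∈ Sᶜ := u.2
  have hEq : (⟨(incl G S x u).1, hu⟩ : ↥Sᶜ) = u := Subtype.ext rfl
  rcases avoid p hu with ⟨hb, hr⟩ | ⟨w, hw, hadj, hr⟩
  · have hEv : (⟨((incl G S x) v).1, hb⟩ : ↥Sᶜ) = v := Subtype.ext rfl
    rw [ConnectedComponent.eq]
    exact hEv ▸ hEq ▸ hr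
  · exact absurd (ConnectedComponent.eq.mpr (hEq ▸ hr).symm) (hC w hw hadj)

/-- Parity: the number of odd components of `G - S` has the same parity as `|Sᶜ|`. -/
lemma parity [Fintype V] (G : SimpleGraph V) (S : Set V) :
    Odd Sᶜ.ncard ↔ Odd (oddComponents G S) := by
  have h := (SimpleGraph.odd_ncard_oddComponents (G := G.induce Sᶜ)).symm
  simp_rw [Nat.card_coe_set_eq] at h
  exact h

end TutteAux

open TutteAux in
/-- If `S` is a minimal Tutte set in a cubic graph, then every vertex of `S` has its
neighbors outside `S`, in pairwise distinct components of `G - S`. -/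
theorem minimal_tutte_set_neighbors {V : Type} [Fintype V] (G : SimpleGraph V)
    (hreg : ∀ v : V, (G.neighborSet v).ncard = 3)
    (S : Set V)
    (htutte : S.ncard + 2 ≤ oddComponents G S)
    (hmin : ∀ S' : Set V, S' ⊂ S → ¬ (S'.ncard + 2 ≤ oddComponents G S')) :
    ∀ x ∈ S, ∀ u v : V, G.Adj x u → G.Adj x v → u ≠ v →
      ∃ (hu : u ∈ Sᶜ) (hv : v ∈ Sᶜ),
        (G.induce Sᶜ).connectedComponentMk ⟨u, hu⟩ ≠
        (G.induce Sᶜ).connectedComponentMk ⟨v, hv⟩ := by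
  classical
  intro x hx u v hxu hxv huv
  by_contra hcon
  push_neg at hcon
  -- basic cardinality facts
  have hmin' := hmin (S \ {x}) (Set.sdiff_singleton_ssubset.mpr hx)
  have hS1 : 0 < S.ncard := (Set.ncard_pos (Set.toFinite S)).mpr ⟨x, hx⟩
  have hS'card : (S \ {x}).ncard = S.ncard - 1 :=
    Set.ncard_diff_singleton_of_mem hx
  have hxc : x ∉ Sᶜ := by simpa using hx
  have hcompl : (S \ {x})ᶜ.ncard = Sᶜ.ncard + 1 := by
    have hins : (S \ {x})ᶜ = insert x Sᶜ := by
      ext y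
      by_cases hy : y = x <;> simp [hy, hx]
    rw [hins, Set.ncard_insert_of_notMem hxc (Set.toFinite _)]
  -- the component type of `G - S` is nonempty
  haveI hne : Nonempty ((G.induce Sᶜ).ConnectedComponent) := by
    have h0 : {C : (G.induce Sᶜ).ConnectedComponent | Odd C.supp.ncard}.Nonempty := by
      apply Set.nonempty_of_ncard_ne_zero
      have : S.ncard + 2 ≤ {C : (G.induce Sᶜ).ConnectedComponent | Odd C.supp.ncard}.ncard :=
        htutte
      omega
    exact ⟨h0.choose⟩
  haveI : Finite ((G.induce Sᶜ).ConnectedComponent) := Quot.finite _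
  haveI : Finite ((G.induce (S \ {x})ᶜ).ConnectedComponent) := Quot.finite _
  -- the set of components of `G - S` touched by `x`
  set T : Set ((G.induce Sᶜ).ConnectedComponent) :=
    {C | ∃ w, ∃ hw : w ∈ Sᶜ, G.Adj x w ∧
      (G.induce Sᶜ).connectedComponentMk ⟨w, hw⟩ = C} with hT
  set F : V → (G.induce Sᶜ).ConnectedComponent :=
    fun w => if hw : w ∈ Sᶜ then (G.induce Sᶜ).connectedComponentMk ⟨w, hw⟩
      else Classical.arbitrary _ with hF
  have hTsub : T ⊆ F '' (G.neighborSet x ∩ Sᶜ) := by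
    rintro C ⟨w, hw, hadj, rfl⟩
    exact ⟨w, ⟨hadj, hw⟩, by rw [hF]; simp only [dif_pos hw]⟩
  have hN : (G.neighborSet x).ncard = 3 := hreg x
  -- `T` has at most two elements
  have hT2 : T.ncard ≤ 2 := by
    have key : ∀ y, y ∈ G.neighborSet x → y ∉ Sᶜ → T.ncard ≤ 2 := by
      intro y hyN hyc
      have h2 : G.neighborSet x ∩ Sᶜ ⊆ G.neighborSet x \ {y} := by
        rintro w ⟨hw1, hw2⟩
        exact ⟨hw1, fun h => hyc (h ▸ hw2)⟩
      calc T.ncard ≤ (F '' (G.neighborSet x ∩ Sᶜ)).ncard :=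
            Set.ncard_le_ncard hTsub (Set.Finite.image _ (Set.toFinite _))
        _ ≤ (G.neighborSet x ∩ Sᶜ).ncard := Set.ncard_image_le (Set.toFinite _)
        _ ≤ (G.neighborSet x \ {y}).ncard := Set.ncard_le_ncard h2 (Set.toFinite _)
        _ = 2 := by
            rw [Set.ncard_diff_singleton_of_mem hyN, hN]
    by_cases hu : u ∈ Sᶜ
    · by_cases hv : v ∈ Sᶜ
      · -- same component case
        have heq := hcon hu hv
        have hsub2 : T ⊆ insert ((G.induce Sᶜ).connectedComponentMk ⟨u, hu⟩)
            (F '' ((G.neighborSet x ∩ Sᶜ) \ {u, v})) := by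
          rintro C ⟨w, hw, hadj, rfl⟩
          by_cases hwu : w = u
          · subst hwu; exact Or.inl rfl
          · by_cases hwv : w = v
            · subst hwv
              exact Or.inl heq.symm
            · exact Or.inr ⟨w, ⟨⟨hadj, hw⟩, by simp [hwu, hwv]⟩,
                by rw [hF]; simp only [dif_pos hw]⟩
        have hpair : ({u, v} : Set V) ⊆ G.neighborSet x := by
          rintro w (rfl | rfl)
          · exact hxu
          · exact hxv
        calc T.ncard ≤ _ :=
              Set.ncard_le_ncard hsub2
                (Set.Finite.insert _ (Set.Finite.image _ (Set.toFinite _)))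
          _ ≤ (F '' ((G.neighborSet x ∩ Sᶜ) \ {u, v})).ncard + 1 :=
              Set.ncard_insert_le _ _
          _ ≤ ((G.neighborSet x ∩ Sᶜ) \ {u, v}).ncard + 1 :=
              Nat.add_le_add_right (Set.ncard_image_le (Set.toFinite _)) 1
          _ ≤ (G.neighborSet x \ {u, v}).ncard + 1 :=
              Nat.add_le_add_right (Set.ncard_le_ncard
                (Set.diff_subset_diff_left Set.inter_subset_left)
                ((Set.toFinite _).diff)) 1
          _ ≤ 2 := by
              rw [Set.ncard_diff hpair (Set.toFinite _), hN, Set.ncard_pair huv]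
      · exact key v hxv hv
    · exact key u hxu hu
  -- components not touched by `x` inject into odd components of `G - (S \ {x})`
  set O : Set ((G.induce Sᶜ).ConnectedComponent) :=
    {C | Odd C.supp.ncard} with hO
  have huntouched : ∀ C ∈ O \ T, ∀ w, ∀ hw : w ∈ Sᶜ, G.Adj x w →
      (G.induce Sᶜ).connectedComponentMk ⟨w, hw⟩ ≠ C := by
    rintro C ⟨_, hCT⟩ w hw hadj heq
    exact hCT ⟨w, hw, hadj, heq⟩
  have hle : (O \ T).ncard ≤ oddComponents G (S \ {x}) := by
    apply Set.ncard_le_ncard_of_injOn (fun C => C.map (incl G S x))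
    · intro C hC
      have hsupp := supp_map_of_untouched C (huntouched C hC)
      have hcard : (C.map (incl G S x)).supp.ncard = C.supp.ncard := by
        rw [hsupp, Set.ncard_image_of_injective _ incl_inj]
      show Odd (C.map (incl G S x)).supp.ncard
      rw [hcard]
      exact hC.1
    · intro C hC D _ h
      exact map_eq_of_untouched (huntouched C hC) h
  have hsplit : oddComponents G S ≤ T.ncard + (O \ T).ncard := by
    have hOeq : O = (O ∩ T) ∪ (O \ T) := (Set.inter_union_diff O T).symm
    have h1 : O.ncard ≤ (O ∩ T).ncard + (O \ T).ncard := by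
      conv_lhs => rw [hOeq]
      exact Set.ncard_union_le _ _
    have h2 : (O ∩ T).ncard ≤ T.ncard :=
      Set.ncard_le_ncard Set.inter_subset_right (Set.toFinite _)
    have h3 : oddComponents G S = O.ncard := rfl
    omega
  -- final parity contradiction
  have p1 := parity G S
  have p2 := parity G (S \ {x})
  rw [Nat.odd_iff] at p1 p2
  rw [Nat.odd_iff] at p1 p2
  omega
end

section
/- Let G be a graph containing a vertex subset X such that G is obtained from a 3-regular bipartite graph H with parts X and Y by deleting a vertex ŷ ∈ Y and possibly merging each remaining vertex of Y into a connected subgraph lying in a single component of G - X. If every cycle of G entering a component of G - X from X can only exit that component through edges corresponding to a single vertex y ∈ Y, then G has no 2-factor. -/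
open SimpleGraph
open scoped Classical

/-- Abstract form of the construction of the family `𝒢`: `G` contains an independent set
`X` with `|X| = |Y|`, each edge leaving `X` carries a label in `Y` coming from the original
cubic bipartite graph `H` (so each label is carried by at most three edges), and every
component of `G - X` can be entered or exited only through edges carrying one single label
`y ≠ ŷ`.  Then `G` has no 2-factor. -/
theorem exploded_no_two_factor {V Y : Type} [Fintype V] [Fintype Y]
    (G : SimpleGraph V) (X : Set V) (y0 : Y)
    (hXcard : X.ncard = Fintype.card Y)
    (hXindep : ∀ x ∈ X, ∀ v, G.Adj x v → v ∉ X)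
    (lab : Sym2 V → Y)
    (hlab3 : ∀ y : Y,
      {e ∈ G.edgeSet | (∃ u v, e = s(u, v) ∧ u ∈ X ∧ v ∉ X) ∧ lab e = y}.ncard ≤ 3)
    (hexit : ∀ C : (G.induce Xᶜ).ConnectedComponent, ∃ y : Y, y ≠ y0 ∧
      ∀ u v, G.Adj u v → u ∈ X → ∀ hv : v ∈ Xᶜ,
        (G.induce Xᶜ).connectedComponentMk ⟨v, hv⟩ = C → lab s(u, v) = y) :
    ¬ ∃ M : G.Subgraph, M.IsSpanning ∧ ∀ v : V, (M.neighborSet v).ncard = 2 := by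
  rintro ⟨M, _hMs, hMd⟩
  classical
  haveI : Fintype (G.induce Xᶜ).ConnectedComponent := Fintype.ofFinite _
  have hNF : ∀ v, (M.neighborSet v).toFinset.card = 2 := fun v => by
    rw [← Set.ncard_eq_toFinset_card']; exact hMd v
  set crossP : Finset (V × V) :=
    Finset.univ.filter (fun p => p.1 ∈ X ∧ M.Adj p.1 p.2) with hcrossP
  have hmem : ∀ p : V × V, p ∈ crossP ↔ p.1 ∈ X ∧ M.Adj p.1 p.2 := by
    intro p; simp [hcrossP]
  have hsnd : ∀ p ∈ crossP, p.2 ∈ Xᶜ := by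
    intro p hp
    obtain ⟨h1, h2⟩ := (hmem p).1 hp
    exact hXindep p.1 h1 p.2 h2.adj_sub
  set cf : V × V → Option (G.induce Xᶜ).ConnectedComponent := fun p =>
    if h : p.2 ∈ Xᶜ then some ((G.induce Xᶜ).connectedComponentMk ⟨p.2, h⟩) else none with hcf
  have hcf_eq : ∀ (p : V × V) (h : p.2 ∈ Xᶜ) (C : (G.induce Xᶜ).ConnectedComponent),
      cf p = some C ↔ (G.induce Xᶜ).connectedComponentMk ⟨p.2, h⟩ = C := by
    intro p h C
    simp only [hcf, dif_pos h, Option.some.injEq]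
  -- Step 1: the number of cross pairs is `2 * |X|`.
  have hXf : ∀ p ∈ crossP, p.1 ∈ X.toFinset := fun p hp => Set.mem_toFinset.2 ((hmem p).1 hp).1
  have step1 : crossP.card = 2 * X.ncard := by
    rw [Finset.card_eq_sum_card_fiberwise hXf]
    have h2 : ∀ x ∈ X.toFinset, (crossP.filter (fun p => p.1 = x)).card = 2 := by
      intro x hx
      rw [← hNF x]
      apply Finset.card_nbij' (fun p => p.2) (fun v => (x, v))
      · intro p hp
        rw [Finset.mem_coe, Finset.mem_filter] at hp
        simp only [Finset.mem_coe, Set.mem_toFinset, SimpleGraph.Subgraph.mem_neighborSet]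
        exact hp.2 ▸ ((hmem p).1 hp.1).2
      · intro v hv
        simp only [Finset.mem_coe, Set.mem_toFinset, SimpleGraph.Subgraph.mem_neighborSet] at hv
        rw [Finset.mem_coe, Finset.mem_filter]
        exact ⟨(hmem _).2 ⟨Set.mem_toFinset.1 hx, hv⟩, rfl⟩
      · intro p hp
        rw [Finset.mem_coe, Finset.mem_filter] at hp
        exact Prod.ext hp.2.symm rfl
      · intro v _; rfl
    rw [Finset.sum_congr rfl h2, Finset.sum_const, smul_eq_mul,
      ← Set.ncard_eq_toFinset_card', mul_comm]
  -- Step 2: partition cross pairs by label.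
  have step2 : crossP.card
      = ∑ y : Y, (crossP.filter (fun p => lab s(p.1, p.2) = y)).card :=
    Finset.card_eq_sum_card_fiberwise (fun p _ => Finset.mem_univ _)
  -- each label class has at most 3 elements
  have hle3 : ∀ y : Y, (crossP.filter (fun p => lab s(p.1, p.2) = y)).card ≤ 3 := by
    intro y
    set S := crossP.filter (fun p => lab s(p.1, p.2) = y) with hS
    have hinj : Set.InjOn (fun p : V × V => s(p.1, p.2)) ↑S := by
      intro p hp q hq he
      rw [Finset.mem_coe, hS, Finset.mem_filter] at hp hq
      have hp1 := ((hmem p).1 hp.1).1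
      have hq2 := hsnd q hq.1
      rcases Sym2.eq_iff.1 he with ⟨h1, h2⟩ | ⟨h1, h2⟩
      · exact Prod.ext h1 h2
      · exact absurd (h1 ▸ hp1) hq2
    have hsub : (↑(S.image (fun p : V × V => s(p.1, p.2))) : Set (Sym2 V)) ⊆
        {e ∈ G.edgeSet | (∃ u v, e = s(u, v) ∧ u ∈ X ∧ v ∉ X) ∧ lab e = y} := by
      intro e he
      rw [Finset.coe_image] at he
      obtain ⟨p, hp, rfl⟩ := he
      rw [Finset.mem_coe, hS, Finset.mem_filter] at hp
      obtain ⟨h1, h2⟩ := (hmem p).1 hp.1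
      exact ⟨G.mem_edgeSet.2 h2.adj_sub, ⟨p.1, p.2, rfl, h1, hsnd p hp.1⟩, hp.2⟩
    calc S.card = (S.image (fun p : V × V => s(p.1, p.2))).card :=
          (Finset.card_image_of_injOn hinj).symm
      _ = (↑(S.image (fun p : V × V => s(p.1, p.2))) : Set (Sym2 V)).ncard :=
          (Set.ncard_coe_finset _).symm
      _ ≤ _ := Set.ncard_le_ncard hsub (Set.toFinite _)
      _ ≤ 3 := hlab3 y
  -- the class of `y0` is empty
  have hy0 : (crossP.filter (fun p => lab s(p.1, p.2) = y0)).card = 0 := by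
    rw [Finset.card_eq_zero, Finset.filter_eq_empty_iff]
    intro p hp
    have h1 := (hmem p).1 hp
    have h2 := hsnd p hp
    obtain ⟨y, hyne, hrule⟩ := hexit ((G.induce Xᶜ).connectedComponentMk ⟨p.2, h2⟩)
    have hy := hrule p.1 p.2 h1.2.adj_sub h1.1 h2 rfl
    intro h
    exact hyne (hy.symm.trans h)
  -- the number of cross pairs entering a fixed component is even
  have hcompEven : ∀ C : (G.induce Xᶜ).ConnectedComponent,
      Even ((crossP.filter (fun p => cf p = some C)).card) := by
    intro C
    set A : Set V :=
      {v | ∃ h : v ∈ Xᶜ, (G.induce Xᶜ).connectedComponentMk ⟨v, h⟩ = C} with hA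
    set AF : Finset V := Finset.univ.filter (· ∈ A) with hAF
    have hAmem : ∀ v, v ∈ AF ↔ v ∈ A := fun v => by simp [hAF]
    have hAadj : ∀ v ∈ A, ∀ w, M.Adj v w → w ∉ X → w ∈ A := by
      intro v hv w hw hwX
      obtain ⟨hvX, hvC⟩ := hv
      refine ⟨hwX, ?_⟩
      rw [← hvC]
      apply SimpleGraph.ConnectedComponent.sound
      have hadj : (G.induce Xᶜ).Adj ⟨w, hwX⟩ ⟨v, hvX⟩ := by
        simp only [comap_adj, Function.Embedding.coe_subtype]
        exact hw.adj_sub.symm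
      exact hadj.reachable
    -- auxiliary graph of internal edges
    set K : SimpleGraph V :=
      { Adj := fun a b => M.Adj a b ∧ a ∈ A ∧ b ∈ A,
        symm := ⟨fun a b h => ⟨h.1.symm, h.2.2, h.2.1⟩⟩,
        loopless := ⟨fun a h => h.1.ne rfl⟩ } with hK
    have hKadj : ∀ a b, K.Adj a b ↔ M.Adj a b ∧ a ∈ A ∧ b ∈ A := fun a b => by
      rw [hK]
    have hKdeg : ∀ v ∈ AF,
        ((M.neighborSet v).toFinset.filter (fun w => ¬ w ∈ X)).card = K.degree v := by
      intro v hv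
      have hset : (M.neighborSet v).toFinset.filter (fun w => ¬ w ∈ X)
          = K.neighborFinset v := by
        ext w
        simp only [Finset.mem_filter, Set.mem_toFinset, SimpleGraph.mem_neighborFinset,
          SimpleGraph.Subgraph.mem_neighborSet, hKadj]
        constructor
        · rintro ⟨hadj, hwX⟩
          exact ⟨hadj, (hAmem v).1 hv, hAadj v ((hAmem v).1 hv) w hadj hwX⟩
        · rintro ⟨hadj, _, hwA⟩
          exact ⟨hadj, hwA.1⟩
      rw [hset, SimpleGraph.degree]
    have hKzero : ∀ v ∉ AF, K.degree v = 0 := by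
      intro v hv
      have hempty : K.neighborFinset v = ∅ := by
        ext w
        simp only [SimpleGraph.mem_neighborFinset, Finset.notMem_empty, iff_false]
        rintro ⟨_, hvA, _⟩
        exact hv ((hAmem v).2 hvA)
      rw [SimpleGraph.degree, hempty, Finset.card_empty]
    -- the internal degree sum is even (handshake)
    have hXcEven :
        Even (∑ v ∈ AF, ((M.neighborSet v).toFinset.filter (fun w => ¬ w ∈ X)).card) := by
      rw [Finset.sum_congr rfl hKdeg]
      have hext : ∑ v ∈ AF, K.degree v = ∑ v : V, K.degree v := by
        apply Finset.sum_subset (Finset.subset_univ _)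
        intro v _ hv
        exact hKzero v hv
      rw [hext, K.sum_degrees_eq_twice_card_edges]
      exact even_two_mul _
    -- the X-side degree sum counts the cross pairs into `C`
    set D : Finset (V × V) :=
      Finset.univ.filter (fun q : V × V => q.1 ∈ A ∧ M.Adj q.1 q.2 ∧ q.2 ∈ X) with hD
    have hDmem : ∀ q : V × V, q ∈ D ↔ q.1 ∈ A ∧ M.Adj q.1 q.2 ∧ q.2 ∈ X := by
      intro q; simp [hD]
    have hD1 : D.card
        = ∑ v ∈ AF, ((M.neighborSet v).toFinset.filter (fun w => w ∈ X)).card := by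
      have hmaps : ∀ q ∈ D, q.1 ∈ AF := fun q hq => (hAmem q.1).2 ((hDmem q).1 hq).1
      rw [Finset.card_eq_sum_card_fiberwise hmaps]
      refine Finset.sum_congr rfl fun v hv => ?_
      apply Finset.card_nbij' (fun q => q.2) (fun w => (v, w))
      · intro q hq
        rw [Finset.mem_coe, Finset.mem_filter] at hq
        obtain ⟨hq1, hq2⟩ := hq
        obtain ⟨_, hadj, hX⟩ := (hDmem q).1 hq1
        simp only [Finset.mem_coe, Finset.mem_filter, Set.mem_toFinset, SimpleGraph.Subgraph.mem_neighborSet]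
        exact ⟨hq2 ▸ hadj, hX⟩
      · intro w hw
        simp only [Finset.mem_coe, Finset.mem_filter, Set.mem_toFinset,
          SimpleGraph.Subgraph.mem_neighborSet] at hw
        rw [Finset.mem_coe, Finset.mem_filter]
        exact ⟨(hDmem _).2 ⟨(hAmem v).1 hv, hw.1, hw.2⟩, rfl⟩
      · intro q hq
        rw [Finset.mem_coe, Finset.mem_filter] at hq
        exact Prod.ext hq.2.symm rfl
      · intro w _; rfl
    have hD2 : (crossP.filter (fun p => cf p = some C)).card = D.card := by
      apply Finset.card_nbij' Prod.swap Prod.swap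
      · intro p hp
        rw [Finset.mem_coe, Finset.mem_filter] at hp
        obtain ⟨hp1, hp2⟩ := hp
        obtain ⟨hX, hadj⟩ := (hmem p).1 hp1
        have h2 := hsnd p hp1
        refine (hDmem _).2 ⟨⟨h2, (hcf_eq p h2 C).1 hp2⟩, hadj.symm, hX⟩
      · intro q hq
        obtain ⟨⟨h1, h2⟩, hadj, hX⟩ := (hDmem q).1 hq
        rw [Finset.mem_coe, Finset.mem_filter]
        refine ⟨(hmem _).2 ⟨hX, hadj.symm⟩, ?_⟩
        exact (hcf_eq (q.2, q.1) h1 C).2 h2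
      · intro p _; exact Prod.swap_swap p
      · intro q _; exact Prod.swap_swap q
    -- total degree sum over the component is even
    have even1 : Even (∑ v ∈ AF, (M.neighborSet v).toFinset.card) := by
      rw [Finset.sum_congr rfl (fun v _ => hNF v), Finset.sum_const, smul_eq_mul]
      exact ⟨AF.card, by ring⟩
    have hsplit : ∑ v ∈ AF, (M.neighborSet v).toFinset.card
        = (∑ v ∈ AF, ((M.neighborSet v).toFinset.filter (fun w => w ∈ X)).card)
          + ∑ v ∈ AF, ((M.neighborSet v).toFinset.filter (fun w => ¬ w ∈ X)).card := by
      rw [← Finset.sum_add_distrib]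
      exact Finset.sum_congr rfl fun v _ =>
        (Finset.card_filter_add_card_filter_not _).symm
    rw [hsplit] at even1
    rw [hD2, hD1]
    rcases even1 with ⟨a, ha⟩
    rcases hXcEven with ⟨b, hb⟩
    exact ⟨a - b, by omega⟩
  -- each label class has even cardinality
  have hEven : ∀ y : Y, Even ((crossP.filter (fun p => lab s(p.1, p.2) = y)).card) := by
    intro y
    set S := crossP.filter (fun p => lab s(p.1, p.2) = y) with hS
    have hfib : S.card = ∑ o ∈ (Finset.univ : Finset (Option (G.induce Xᶜ).ConnectedComponent)),
        (S.filter (fun p => cf p = o)).card :=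
      Finset.card_eq_sum_card_fiberwise (fun p _ => Finset.mem_univ _)
    rw [hfib]
    apply Finset.even_sum
    intro o _
    match o with
    | none =>
      have : S.filter (fun p => cf p = none) = ∅ := by
        rw [Finset.filter_eq_empty_iff]
        intro p hp
        rw [hS, Finset.mem_filter] at hp
        have h2 := hsnd p hp.1
        simp only [hcf, dif_pos h2]
        simp
      rw [this, Finset.card_empty]
      exact Even.zero
    | some C =>
      by_cases hne : (S.filter (fun p => cf p = some C)) = ∅
      · rw [hne, Finset.card_empty]; exact Even.zero
      · obtain ⟨p0, hp0⟩ := Finset.nonempty_of_ne_empty hne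
        obtain ⟨yC, _, hrule⟩ := hexit C
        have hlabp : ∀ p ∈ crossP, cf p = some C → lab s(p.1, p.2) = yC := by
          intro p hp hcfp
          have h2 := hsnd p hp
          exact hrule p.1 p.2 ((hmem p).1 hp).2.adj_sub ((hmem p).1 hp).1 h2
            ((hcf_eq p h2 C).1 hcfp)
        rw [Finset.mem_filter, hS, Finset.mem_filter] at hp0
        have hyy : yC = y := by
          rw [← hp0.1.2]
          exact (hlabp p0 hp0.1.1 hp0.2).symm
        have hSC : S.filter (fun p => cf p = some C)
            = crossP.filter (fun p => cf p = some C) := by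
          ext p
          simp only [hS, Finset.mem_filter]
          constructor
          · rintro ⟨⟨h1, _⟩, h3⟩; exact ⟨h1, h3⟩
          · rintro ⟨h1, h3⟩; exact ⟨⟨h1, hyy ▸ hlabp p h1 h3⟩, h3⟩
        rw [hSC]
        exact hcompEven C
  -- final counting
  have hbound : ∀ y : Y, (crossP.filter (fun p => lab s(p.1, p.2) = y)).card
      ≤ if y = y0 then 0 else 2 := by
    intro y
    by_cases h : y = y0
    · subst h; simp [hy0]
    · rw [if_neg h]
      obtain ⟨k, hk⟩ := hEven y
      have := hle3 y
      omega
  have hsum : ∑ y : Y, (crossP.filter (fun p => lab s(p.1, p.2) = y)).card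
      ≤ 2 * (Fintype.card Y - 1) := by
    calc ∑ y : Y, (crossP.filter (fun p => lab s(p.1, p.2) = y)).card
        ≤ ∑ y : Y, (if y = y0 then 0 else 2) :=
          Finset.sum_le_sum (fun y _ => hbound y)
      _ = 2 * (Fintype.card Y - 1) := by
          rw [← Finset.sum_erase_add _ _ (Finset.mem_univ y0), if_pos rfl, add_zero]
          have hcongr : ∑ y ∈ Finset.univ.erase y0, (if y = y0 then 0 else 2)
              = ∑ _y ∈ Finset.univ.erase y0, 2 :=
            Finset.sum_congr rfl fun y hy => if_neg (Finset.ne_of_mem_erase hy)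
          rw [hcongr, Finset.sum_const, smul_eq_mul,
            Finset.card_erase_of_mem (Finset.mem_univ y0), Finset.card_univ, mul_comm]
  have hY1 : 1 ≤ Fintype.card Y := Fintype.card_pos_iff.2 ⟨y0⟩
  have key : 2 * X.ncard ≤ 2 * (Fintype.card Y - 1) := by
    rw [← step1, step2]
    exact hsum
  rw [hXcard] at key
  omega
end

section
/- Let T be a tree in which every internal (non-leaf) vertex has degree 3 and there are t ≥ 1 internal vertices; then T has t + 2 leaves. If a 5-vertex balloon is attached at each leaf, the resulting 3-regular graph G has n = 6t + 10 vertices and its largest 2-regular subgraph has exactly 5(t+2) = 5(n+2)/6 vertices. -/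
open SimpleGraph

/-- The 5-vertex balloon: `K₄` on `{0,1,2,3}` with the edge `{0,1}` subdivided by the new
vertex `4` (so `4` is the unique vertex of degree 2). -/
def balloon5 : SimpleGraph (Fin 5) :=
  SimpleGraph.fromRel (fun a b =>
    (a = 0 ∧ b = 2) ∨ (a = 0 ∧ b = 3) ∨ (a = 1 ∧ b = 2) ∨ (a = 1 ∧ b = 3) ∨
    (a = 2 ∧ b = 3) ∨ (a = 0 ∧ b = 4) ∨ (a = 1 ∧ b = 4))

/-! ### Auxiliary lemmas -/

section Aux

/-- A nonempty set in which every vertex has two distinct neighbours inside the set cannot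
exist in an acyclic graph. -/
lemma acyclic_no_min2 {W : Type} [Fintype W] {T : SimpleGraph W} (hac : T.IsAcyclic)
    (S : Set W) (hS : ∀ w ∈ S, ∃ u v, u ∈ S ∧ v ∈ S ∧ u ≠ v ∧ T.Adj w u ∧ T.Adj w v) :
    S = ∅ := by
  classical
  by_contra hne
  obtain ⟨w0, hw0⟩ := Set.nonempty_iff_ne_empty.2 hne
  -- build arbitrarily long paths with support in S
  have key : ∀ n : ℕ, ∃ (b a : W) (p : T.Walk b a), p.IsPath ∧ (∀ x ∈ p.support, x ∈ S) ∧
      p.length = n := by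
    intro n
    induction n with
    | zero => exact ⟨w0, w0, Walk.nil, Walk.IsPath.nil, by simp [hw0], rfl⟩
    | succ n ih =>
      obtain ⟨b, a, p, hp, hsup, hlen⟩ := ih
      have hbS : b ∈ S := hsup b p.start_mem_support
      obtain ⟨u, v, huS, hvS, huv, hbu, hbv⟩ := hS b hbS
      -- choose x adjacent to b, in S, with edge s(b,x) not in p.edges
      have hx : ∃ x, x ∈ S ∧ T.Adj b x ∧ s(b, x) ∉ p.edges := by
        by_contra hcon
        push_neg at hcon
        have h1 := hcon u huS hbu
        have h2 := hcon v hvS hbv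
        cases p with
        | nil => simp at h1
        | cons hadj q =>
          rename_i c
          have hbq : b ∉ q.support := ((Walk.cons_isPath_iff _ _).1 hp).2
          have hbc : b ≠ c := hadj.ne
          have hu : u = c := by
            rcases (List.mem_cons.1 h1) with h' | h'
            · rcases Sym2.eq_iff.1 h' with ⟨_, h⟩ | ⟨h, _⟩
              · exact h
              · exact absurd h hbc
            · exact absurd (Walk.fst_mem_support_of_mem_edges q h') hbq
          have hv : v = c := by
            rcases (List.mem_cons.1 h2) with h' | h'
            · rcases Sym2.eq_iff.1 h' with ⟨_, h⟩ | ⟨h, _⟩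
              · exact h
              · exact absurd h hbc
            · exact absurd (Walk.fst_mem_support_of_mem_edges q h') hbq
          exact huv (hu.trans hv.symm)
      obtain ⟨x, hxS, hbx, hxe⟩ := hx
      have hxsup : x ∉ p.support := by
        intro hmem
        have hr : (p.takeUntil x hmem).IsPath := hp.takeUntil hmem
        have hcyc : (Walk.cons hbx.symm (p.takeUntil x hmem)).IsCycle := by
          rw [Walk.cons_isCycle_iff]
          refine ⟨hr, fun hin => ?_⟩
          have := Walk.edges_takeUntil_subset p hmem hin
          rw [Sym2.eq_swap] at this
          exact hxe this
        exact hac _ hcyc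
      refine ⟨x, a, Walk.cons hbx.symm p, ?_, ?_, by simp [hlen]⟩
      · rw [Walk.cons_isPath_iff]; exact ⟨hp, hxsup⟩
      · intro y hy
        rcases List.mem_cons.1 (by simpa using hy) with h | h
        · exact h ▸ hxS
        · exact hsup y h
  obtain ⟨b, a, p, hp, _, hlen⟩ := key (Fintype.card W)
  exact absurd hp.length_lt (by omega)

lemma ncard_nbr_eq_degree {W : Type} [Fintype W] (T : SimpleGraph W) [DecidableRel T.Adj]
    (w : W) : (T.neighborSet w).ncard = T.degree w := by
  rw [← Nat.card_coe_set_eq, Nat.card_eq_fintype_card, card_neighborSet_eq_degree]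

/-- a tree with all degrees 1 or 3 and `t` internal vertices has `t + 2` leaves -/
lemma leaf_count {W : Type} [Fintype W] (T : SimpleGraph W) (htree : T.IsTree)
    (hdeg : ∀ w : W, (T.neighborSet w).ncard = 1 ∨ (T.neighborSet w).ncard = 3)
    (t : ℕ) (ht : {w : W | (T.neighborSet w).ncard = 3}.ncard = t) :
    {w : W | (T.neighborSet w).ncard = 1}.ncard = t + 2 := by
  classical
  have hd : ∀ w, (T.neighborSet w).ncard = T.degree w := ncard_nbr_eq_degree T
  set L : Finset W := Finset.univ.filter (fun w => ¬ T.degree w = 3) with hL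
  set I : Finset W := Finset.univ.filter (fun w => T.degree w = 3) with hI
  have hL1 : ∀ w ∈ L, T.degree w = 1 := by
    intro w hw
    rw [hL, Finset.mem_filter] at hw
    rcases hdeg w with h | h
    · rw [← hd w]; exact h
    · exact absurd ((hd w) ▸ h) hw.2
  have hcard : I.card + L.card = Fintype.card W := by
    rw [hI, hL, Finset.card_filter_add_card_filter_not, Finset.card_univ]
  have hsum : ∑ w, T.degree w = 2 * T.edgeFinset.card := T.sum_degrees_eq_twice_card_edges
  have hsplit : ∑ w, T.degree w = ∑ w ∈ I, T.degree w + ∑ w ∈ L, T.degree w := by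
    rw [hI, hL, Finset.sum_filter_add_sum_filter_not]
  have hIs : ∑ w ∈ I, T.degree w = 3 * I.card := by
    rw [Finset.sum_congr rfl (fun w hw => (Finset.mem_filter.1 hw).2), Finset.sum_const,
      smul_eq_mul, mul_comm]
  have hLs : ∑ w ∈ L, T.degree w = L.card := by
    rw [Finset.sum_congr rfl hL1, Finset.sum_const, smul_eq_mul, mul_one]
  have hedge : T.edgeFinset.card + 1 = Fintype.card W := htree.card_edgeFinset
  have htI : I.card = t := by
    rw [← ht]
    have : {w : W | (T.neighborSet w).ncard = 3} = {w : W | T.degree w = 3} := by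
      ext w; simp [hd w]
    rw [this, Set.ncard_eq_toFinset_card', Set.toFinset_setOf]
  have htL : {w : W | (T.neighborSet w).ncard = 1}.ncard = L.card := by
    have : {w : W | (T.neighborSet w).ncard = 1} = ↑L := by
      ext w
      simp only [hL, Set.mem_setOf_eq, Finset.coe_filter, Finset.mem_univ, true_and,
        Set.mem_setOf_eq]
      constructor
      · intro h; rw [hd w] at h; omega
      · intro h
        rcases hdeg w with h1 | h1
        · exact h1
        · exact absurd ((hd w) ▸ h1) h
    rw [this, Set.ncard_coe_finset]
  omega

def bRel (a b : Fin 5) : Prop :=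
    (a = 0 ∧ b = 2) ∨ (a = 0 ∧ b = 3) ∨ (a = 1 ∧ b = 2) ∨ (a = 1 ∧ b = 3) ∨
    (a = 2 ∧ b = 3) ∨ (a = 0 ∧ b = 4) ∨ (a = 1 ∧ b = 4)

instance : DecidableRel bRel := fun a b => by unfold bRel; infer_instance

lemma balloon5_adj (a b : Fin 5) : balloon5.Adj a b ↔ a ≠ b ∧ (bRel a b ∨ bRel b a) :=
  SimpleGraph.fromRel_adj _ a b

instance : DecidableRel balloon5.Adj := fun a b => decidable_of_iff _ (balloon5_adj a b).symm

lemma balloon5_nbr4 (b : Fin 5) : balloon5.Adj 4 b ↔ b = 0 ∨ b = 1 := by revert b; decide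

/-- the 5-cycle 4-0-2-3-1-4 inside the balloon -/
def C5 (a b : Fin 5) : Prop :=
  s(a, b) = s(4, 0) ∨ s(a, b) = s(0, 2) ∨ s(a, b) = s(2, 3) ∨ s(a, b) = s(3, 1) ∨
    s(a, b) = s(1, 4)

instance : DecidableRel C5 := fun a b => by unfold C5; infer_instance

lemma C5_symm {a b : Fin 5} (h : C5 a b) : C5 b a := by
  unfold C5 at *; rw [Sym2.eq_swap]; exact h

lemma C5_balloon {a b : Fin 5} (h : C5 a b) : balloon5.Adj a b := by
  revert h; revert a b; decide

def cnext : Fin 5 → Fin 5 := ![2, 4, 3, 1, 0]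
def cprev : Fin 5 → Fin 5 := ![4, 3, 0, 2, 1]

lemma C5_iff (c b : Fin 5) : C5 c b ↔ b = cnext c ∨ b = cprev c := by revert c b; decide

lemma cnext_ne_cprev (c : Fin 5) : cnext c ≠ cprev c := by revert c; decide

section Balloon
variable {V : Type} (G : SimpleGraph V) (s : Set V)

lemma iso_adj (e : balloon5 ≃g (G.induce s)) (a b : Fin 5) :
    G.Adj ↑(e a) ↑(e b) ↔ balloon5.Adj a b := by
  rw [← e.map_rel_iff]
  rfl

lemma iso_coe_inj (e : balloon5 ≃g (G.induce s)) {a b : Fin 5} (h : (↑(e a) : V) = ↑(e b)) :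
    a = b :=
  e.toEquiv.injective (Subtype.ext h)

lemma iso_surj (e : balloon5 ≃g (G.induce s)) {x : V} (hx : x ∈ s) :
    ∃ a : Fin 5, (↑(e a) : V) = x :=
  ⟨e.symm ⟨x, hx⟩, by simp⟩

lemma part_ncard5 (e : balloon5 ≃g (G.induce s)) : s.ncard = 5 := by
  have h := Nat.card_congr e.toEquiv
  rw [Nat.card_eq_fintype_card, Fintype.card_fin] at h
  rw [← Nat.card_coe_set_eq, ← h]

lemma balloon_outside [Fintype V] (e : balloon5 ≃g (G.induce s))
    (hreg : ∀ v : V, (G.neighborSet v).ncard = 3) :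
    {v : V | v ∉ s ∧ G.Adj (↑(e 4)) v}.ncard = 1 := by
  classical
  have hin : {v : V | v ∈ s ∧ G.Adj (↑(e 4)) v} = {↑(e 0), ↑(e 1)} := by
    ext x
    simp only [Set.mem_setOf_eq, Set.mem_insert_iff, Set.mem_singleton_iff]
    constructor
    · rintro ⟨hxs, hadj⟩
      obtain ⟨a, rfl⟩ := iso_surj G s e hxs
      rw [iso_adj, balloon5_nbr4] at hadj
      rcases hadj with h | h <;> [left; right] <;> rw [h]
    · rintro (rfl | rfl) <;>
        exact ⟨Subtype.coe_prop _, (iso_adj G s e 4 _).2 (by decide)⟩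
  have hsplit : G.neighborSet (↑(e 4)) =
      {v : V | v ∈ s ∧ G.Adj (↑(e 4)) v} ∪ {v : V | v ∉ s ∧ G.Adj (↑(e 4)) v} := by
    ext x
    by_cases hx : x ∈ s <;> simp [SimpleGraph.mem_neighborSet, hx]
  have hdisj : Disjoint {v : V | v ∈ s ∧ G.Adj (↑(e 4)) v}
      {v : V | v ∉ s ∧ G.Adj (↑(e 4)) v} := by
    rw [Set.disjoint_left]
    rintro x ⟨h1, _⟩ ⟨h2, _⟩
    exact h2 h1
  have h2 : ({↑(e 0), ↑(e 1)} : Set V).ncard = 2 := by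
    apply Set.ncard_pair
    intro h
    exact absurd (iso_coe_inj G s e h) (by decide)
  have := hreg (↑(e 4))
  rw [hsplit, Set.ncard_union_eq hdisj (Set.toFinite _) (Set.toFinite _), hin, h2] at this
  omega

end Balloon

end Aux

/-- Let `T` be a tree whose vertices have degree 1 or 3, with `t ≥ 1` vertices of degree 3.
Then `T` has `t + 2` leaves.  Moreover, if `G` is the cubic graph obtained by attaching a
5-vertex balloon at each leaf of `T` (encoded by the partition `P` of `V(G)` into
singletons for internal vertices and balloons for leaves, with cross edges exactly the
tree edges and balloons attached at their degree-2 vertex), then `G` has `6t + 10`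
vertices and its largest 2-regular subgraph has exactly `5(t+2)` vertices. -/
theorem tree_with_balloons {W V : Type} [Fintype W] [Fintype V]
    (T : SimpleGraph W) (htree : T.IsTree)
    (hdeg : ∀ w : W, (T.neighborSet w).ncard = 1 ∨ (T.neighborSet w).ncard = 3)
    (t : ℕ) (ht : {w : W | (T.neighborSet w).ncard = 3}.ncard = t) (ht1 : 1 ≤ t)
    (G : SimpleGraph V)
    (hGreg : ∀ v : V, (G.neighborSet v).ncard = 3)
    (P : W → Set V)
    (hdisj : Pairwise fun w w' => Disjoint (P w) (P w'))
    (hcover : ∀ v : V, ∃ w : W, v ∈ P w)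
    (hint : ∀ w : W, (T.neighborSet w).ncard = 3 → (P w).ncard = 1)
    (hleaf : ∀ w : W, (T.neighborSet w).ncard = 1 →
      ∃ e : balloon5 ≃g (G.induce (P w)),
        ∀ u ∈ P w, (∃ v, v ∉ P w ∧ G.Adj u v) → u = ↑(e 4))
    (hcross₁ : ∀ w w' : W, w ≠ w' → ∀ u ∈ P w, ∀ v ∈ P w', G.Adj u v → T.Adj w w')
    (hcross₂ : ∀ w w' : W, T.Adj w w' → ∃ u ∈ P w, ∃ v ∈ P w', G.Adj u v) :
    {w : W | (T.neighborSet w).ncard = 1}.ncard = t + 2 ∧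
    Fintype.card V = 6 * t + 10 ∧
    (∃ H : G.Subgraph, IsTwoRegularSub G H ∧ H.verts.ncard = 5 * (t + 2)) ∧
    (∀ H : G.Subgraph, IsTwoRegularSub G H → H.verts.ncard ≤ 5 * (t + 2)) := by
  classical
  choose E hE using hleaf
  have hpart1 : {w : W | (T.neighborSet w).ncard = 1}.ncard = t + 2 :=
    leaf_count T htree hdeg t ht
  -- Finset versions of the leaf and internal sets
  set Lf : Finset W := Finset.univ.filter (fun w => (T.neighborSet w).ncard = 1) with hLfdef
  set If : Finset W := Finset.univ.filter (fun w => (T.neighborSet w).ncard = 3) with hIfdef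
  have hLfmem : ∀ w, w ∈ Lf ↔ (T.neighborSet w).ncard = 1 := by
    intro w; rw [hLfdef, Finset.mem_filter]; simp
  have hLfcard : Lf.card = t + 2 := by
    rw [← hpart1, Set.ncard_eq_toFinset_card', Set.toFinset_setOf]
  have hIfcard : If.card = t := by
    rw [← ht, Set.ncard_eq_toFinset_card', Set.toFinset_setOf]
  have hLfneg : Lf = Finset.univ.filter (fun w => ¬ (T.neighborSet w).ncard = 3) := by
    apply Finset.filter_congr
    intro w _
    rcases hdeg w with h | h <;> simp [h]
  -- Finset versions of the parts
  set Pf : W → Finset V := fun w => (Set.toFinite (P w)).toFinset with hPfdef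
  have hPfmem : ∀ w v, v ∈ Pf w ↔ v ∈ P w := fun w v => Set.Finite.mem_toFinset _
  have hPfcard : ∀ w, (Pf w).card = (P w).ncard :=
    fun w => (Set.ncard_eq_toFinset_card _ _).symm
  have hPfdisj : ∀ w ∈ (Finset.univ : Finset W), ∀ w' ∈ (Finset.univ : Finset W),
      w ≠ w' → Disjoint (Pf w) (Pf w') := by
    intro w _ w' _ hne
    rw [hPfdef, Set.Finite.disjoint_toFinset]
    exact hdisj hne
  have hP5 : ∀ w, (T.neighborSet w).ncard = 1 → (P w).ncard = 5 :=
    fun w hw => part_ncard5 G (P w) (E w hw)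
  -- cardinality of V
  have huniv : (Finset.univ : Finset V) = Finset.univ.biUnion Pf := by
    refine (Finset.eq_univ_iff_forall.2 fun v => ?_).symm
    obtain ⟨w, hw⟩ := hcover v
    exact Finset.mem_biUnion.2 ⟨w, Finset.mem_univ _, (hPfmem w v).2 hw⟩
  have hcardV : Fintype.card V = 6 * t + 10 := by
    have h1 : Fintype.card V = ∑ w, (Pf w).card := by
      rw [← Finset.card_univ, huniv, Finset.card_biUnion hPfdisj]
    have h2 : ∑ w, (Pf w).card = ∑ w ∈ If, (Pf w).card + ∑ w ∈ Lf, (Pf w).card := by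
      rw [hIfdef, hLfneg, Finset.sum_filter_add_sum_filter_not]
    have h3 : ∑ w ∈ If, (Pf w).card = If.card := by
      rw [Finset.sum_congr rfl (fun w hw => by
        rw [hPfcard, hint w (Finset.mem_filter.1 hw).2]), Finset.sum_const, smul_eq_mul,
        mul_one]
    have h4 : ∑ w ∈ Lf, (Pf w).card = 5 * Lf.card := by
      rw [Finset.sum_congr rfl (fun w hw => by
        rw [hPfcard, hP5 w ((hLfmem w).1 hw)]), Finset.sum_const, smul_eq_mul, mul_comm]
    rw [h1, h2, h3, h4, hIfcard, hLfcard]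
    ring
  -- the union of the leaf parts
  set U : Finset V := Lf.biUnion Pf with hUdef
  have hUcard : U.card = 5 * (t + 2) := by
    rw [hUdef, Finset.card_biUnion (fun w hw w' hw' hne => hPfdisj w (Finset.mem_univ _)
      w' (Finset.mem_univ _) hne)]
    rw [Finset.sum_congr rfl (fun w hw => by
      rw [hPfcard, hP5 w ((hLfmem w).1 hw)]), Finset.sum_const, smul_eq_mul, mul_comm,
      hLfcard]
  -- the 2-regular subgraph consisting of one 5-cycle in each balloon
  have hAdjG : ∀ (w) (hw : (T.neighborSet w).ncard = 1) (a b : Fin 5), C5 a b →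
      G.Adj ↑(E w hw a) ↑(E w hw b) :=
    fun w hw a b h => (iso_adj G (P w) (E w hw) a b).2 (C5_balloon h)
  set H₀ : G.Subgraph :=
    { verts := ↑U
      Adj := fun u v => ∃ w, ∃ hw : (T.neighborSet w).ncard = 1, ∃ a b : Fin 5,
        C5 a b ∧ u = ↑(E w hw a) ∧ v = ↑(E w hw b)
      adj_sub := by
        rintro u v ⟨w, hw, a, b, hC, rfl, rfl⟩
        exact hAdjG w hw a b hC
      edge_vert := by
        rintro u v ⟨w, hw, a, b, hC, rfl, rfl⟩
        rw [Finset.mem_coe, hUdef, Finset.mem_biUnion]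
        exact ⟨w, (hLfmem w).2 hw, (hPfmem _ _).2 (Subtype.coe_prop _)⟩
      symm := by
        constructor
        rintro u v ⟨w, hw, a, b, hC, rfl, rfl⟩
        exact ⟨w, hw, b, a, C5_symm hC, rfl, rfl⟩ } with hH₀def
  have hH₀reg : IsTwoRegularSub G H₀ := by
    intro v hv
    have hv' : v ∈ (U : Set V) := hv
    rw [Finset.mem_coe, hUdef, Finset.mem_biUnion] at hv'
    obtain ⟨w, hwLf, hvP⟩ := hv'
    have hw : (T.neighborSet w).ncard = 1 := (hLfmem w).1 hwLf
    have hvPw : v ∈ P w := (hPfmem w v).1 hvP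
    obtain ⟨c, hc⟩ := iso_surj G (P w) (E w hw) hvPw
    have hset : H₀.neighborSet v = {↑(E w hw (cnext c)), ↑(E w hw (cprev c))} := by
      ext u
      constructor
      · rintro ⟨w', hw', a, b, hC, hva, rfl⟩
        have hvP' : v ∈ P w' := hva ▸ Subtype.coe_prop _
        have hww : w' = w := by
          by_contra hne
          exact Set.disjoint_left.1 (hdisj hne) hvP' hvPw
        subst hww
        have hca : a = c := iso_coe_inj G (P w') (E w' hw') (hva.symm.trans hc.symm)
        rcases (C5_iff c b).1 (hca ▸ hC) with rfl | rfl
        · exact Set.mem_insert _ _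
        · exact Set.mem_insert_of_mem _ rfl
      · rintro (rfl | rfl)
        · exact ⟨w, hw, c, cnext c, (C5_iff c _).2 (Or.inl rfl), hc.symm, rfl⟩
        · exact ⟨w, hw, c, cprev c, (C5_iff c _).2 (Or.inr rfl), hc.symm, rfl⟩
    rw [hset]
    exact Set.ncard_pair (fun h => cnext_ne_cprev c (iso_coe_inj G (P w) (E w hw) h))
  have hH₀card : H₀.verts.ncard = 5 * (t + 2) := by
    have : H₀.verts = (U : Set V) := rfl
    rw [this, Set.ncard_coe_finset, hUcard]
  refine ⟨hpart1, hcardV, ⟨H₀, hH₀reg, hH₀card⟩, ?_⟩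
  -- the upper bound
  intro H hH
  -- (a) no edge of H leaves a balloon
  have nocross : ∀ w (hw : (T.neighborSet w).ncard = 1), ∀ u ∈ P w, ∀ v, v ∉ P w →
      ¬ H.Adj u v := by
    intro w hw u0 hu0 v0 hv0 hadj
    have hu0e4 : u0 = ↑(E w hw 4) := hE w hw u0 hu0 ⟨v0, hv0, H.adj_sub hadj⟩
    rw [hu0e4] at hadj hu0
    set e4 : V := ↑(E w hw 4) with he4def
    -- the outside neighbourhood of the attachment vertex is exactly {v0}
    have hO : {v : V | v ∉ P w ∧ G.Adj e4 v}.ncard = 1 :=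
      balloon_outside G (P w) (E w hw) hGreg
    have hv0O : v0 ∈ {v : V | v ∉ P w ∧ G.Adj e4 v} := ⟨hv0, H.adj_sub hadj⟩
    obtain ⟨x, hx⟩ := Set.ncard_eq_one.1 hO
    have hOv0 : {v : V | v ∉ P w ∧ G.Adj e4 v} = {v0} := by
      rw [hx] at hv0O ⊢
      rw [hv0O]
    have he4H : e4 ∈ H.verts := H.edge_vert hadj
    -- the auxiliary graph of H-edges inside the balloon
    set K : SimpleGraph V :=
      { Adj := fun x y => H.Adj x y ∧ x ∈ P w ∧ y ∈ P w
        symm := ⟨fun x y ⟨h, hx1, hy1⟩ => ⟨H.symm.symm _ _ h, hy1, hx1⟩⟩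
        loopless := ⟨fun x ⟨h, _, _⟩ => G.loopless.irrefl x (H.adj_sub h)⟩ } with hKdef
    set B : Finset V := ((Set.toFinite (P w ∩ H.verts)).toFinset).erase e4 with hBdef
    have hdegK : ∀ x : V, (K.neighborSet x).ncard =
        if x = e4 then 1 else if x ∈ B then 2 else 0 := by
      intro x
      by_cases hx4 : x = e4
      · rw [if_pos hx4, hx4]
        have hKx : K.neighborSet e4 = H.neighborSet e4 \ {v0} := by
          ext y
          simp only [Set.mem_diff, Set.mem_singleton_iff, SimpleGraph.mem_neighborSet,
            Subgraph.mem_neighborSet]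
          constructor
          · rintro ⟨h, _, hyP⟩
            exact ⟨h, fun hy => hv0 (hy ▸ hyP)⟩
          · rintro ⟨h, hne⟩
            refine ⟨h, hu0, ?_⟩
            by_contra hyP
            have hmem : y ∈ {v : V | v ∉ P w ∧ G.Adj e4 v} := ⟨hyP, H.adj_sub h⟩
            rw [hOv0] at hmem
            exact hne hmem
        rw [hKx, Set.ncard_diff_singleton_of_mem
          (show v0 ∈ H.neighborSet e4 from hadj), hH e4 he4H]
      · rw [if_neg hx4]
        by_cases hxB : x ∈ B
        · rw [if_pos hxB]
          rw [hBdef, Finset.mem_erase, Set.Finite.mem_toFinset] at hxB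
          obtain ⟨-, hxP, hxH⟩ := hxB
          have hKx : K.neighborSet x = H.neighborSet x := by
            ext y
            constructor
            · rintro ⟨h, _, _⟩; exact h
            · intro h
              refine ⟨h, hxP, ?_⟩
              by_contra hyP
              exact hx4 (hE w hw x hxP ⟨y, hyP, H.adj_sub h⟩)
          rw [hKx, hH x hxH]
        · rw [if_neg hxB]
          have hKx : K.neighborSet x = ∅ := by
            ext y
            simp only [Set.mem_empty_iff_false, iff_false]
            rintro ⟨h, hxP, _⟩
            exact hxB (Finset.mem_erase.2 ⟨hx4, Set.Finite.mem_toFinset _ |>.2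
              ⟨hxP, H.edge_vert h⟩⟩)
          rw [hKx, Set.ncard_empty]
    have hsumK : ∑ x, K.degree x = 2 * K.edgeFinset.card :=
      K.sum_degrees_eq_twice_card_edges
    have he4B : e4 ∉ B := Finset.notMem_erase _ _
    have hsum2 : ∑ x, K.degree x = 2 * B.card + 1 := by
      have hptwise : ∀ x : V, K.degree x =
          (if x ∈ B then 2 else 0) + (if x = e4 then 1 else 0) := by
        intro x
        rw [← ncard_nbr_eq_degree, hdegK x]
        by_cases h1 : x = e4
        · subst h1
          rw [if_pos rfl, if_neg he4B, if_pos rfl]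
        · by_cases h2 : x ∈ B <;> simp [h1, h2]
      rw [Finset.sum_congr rfl (fun x _ => hptwise x), Finset.sum_add_distrib]
      rw [Finset.sum_ite_mem, Finset.univ_inter, Finset.sum_const, smul_eq_mul, mul_comm,
        Finset.sum_ite_eq' Finset.univ e4 (fun _ => 1), if_pos (Finset.mem_univ _)]
    omega
  -- (b) no internal vertex lies in H
  have noint : ∀ w, (T.neighborSet w).ncard = 3 → ∀ v ∈ P w, v ∉ H.verts := by
    have hS : {w' : W | (T.neighborSet w').ncard = 3 ∧ ∃ v ∈ P w', v ∈ H.verts} = ∅ := by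
      apply acyclic_no_min2 htree.IsAcyclic
      rintro w' ⟨hw3, v, hvP, hvH⟩
      have hPw1 : P w' = {v} := by
        obtain ⟨a, ha⟩ := Set.ncard_eq_one.1 (hint w' hw3)
        rw [ha] at hvP ⊢
        rw [hvP]
      have key : ∀ x, H.Adj v x → ∃ wx, ((T.neighborSet wx).ncard = 3 ∧
          ∃ y ∈ P wx, y ∈ H.verts) ∧ x ∈ P wx ∧ T.Adj w' wx := by
        intro x hx
        have hxPw' : x ∉ P w' := by
          rw [hPw1]
          intro h
          rw [Set.mem_singleton_iff.1 h] at hx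
          exact G.loopless.irrefl v (H.adj_sub hx)
        obtain ⟨wx, hwx⟩ := hcover x
        have hne : w' ≠ wx := fun h => hxPw' (h ▸ hwx)
        have hT : T.Adj w' wx := hcross₁ w' wx hne v hvP x hwx (H.adj_sub hx)
        have hwx3 : (T.neighborSet wx).ncard = 3 := by
          rcases hdeg wx with h1 | h1
          · exact absurd (H.symm.symm _ _ hx) (nocross wx h1 x hwx v
              (Set.disjoint_left.1 (hdisj hne) hvP))
          · exact h1
        exact ⟨wx, ⟨hwx3, x, hwx, H.edge_vert (H.symm.symm _ _ hx)⟩, hwx, hT⟩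
      obtain ⟨a, b, hab, hnbr⟩ := Set.ncard_eq_two.1 (hH v hvH)
      have haadj : H.Adj v a := by
        have : a ∈ H.neighborSet v := by rw [hnbr]; exact Set.mem_insert _ _
        exact this
      have hbadj : H.Adj v b := by
        have : b ∈ H.neighborSet v := by rw [hnbr]; exact Set.mem_insert_of_mem _ rfl
        exact this
      obtain ⟨wa, hwaS, haP, hTa⟩ := key a haadj
      obtain ⟨wb, hwbS, hbP, hTb⟩ := key b hbadj
      refine ⟨wa, wb, hwaS, hwbS, ?_, hTa, hTb⟩
      intro h
      subst h
      obtain ⟨z, hz⟩ := Set.ncard_eq_one.1 (hint wa hwaS.1)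
      rw [hz] at haP hbP
      exact hab ((Set.mem_singleton_iff.1 haP).trans (Set.mem_singleton_iff.1 hbP).symm)
    intro w hw3 v hv hvH
    exact Set.eq_empty_iff_forall_notMem.1 hS w ⟨hw3, v, hv, hvH⟩
  -- conclude
  have hsub : H.verts ⊆ (U : Set V) := by
    intro v hv
    obtain ⟨w, hw⟩ := hcover v
    rcases hdeg w with h1 | h1
    · rw [Finset.mem_coe, hUdef, Finset.mem_biUnion]
      exact ⟨w, (hLfmem w).2 h1, (hPfmem _ _).2 hw⟩
    · exact absurd hv (noint w h1 v hw)
  calc H.verts.ncard ≤ (U : Set V).ncard := Set.ncard_le_ncard hsub (Set.toFinite _)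
    _ = 5 * (t + 2) := by rw [Set.ncard_coe_finset, hUcard]
end
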